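/- arXiv:1404.2047 — 6 statements merged into one kernel-verified Lean document; each statement's English description precedes it below -/
import Mathlib

section
/- For every complex number w with Im w > 0, one has Im( Li₂(w) + log|w| · log(1−w) ) > 0, where log|w| is the real logarithm of |w| and log(1−w) is the principal complex logarithm. -/
open MeasureTheory Complex

noncomputable def mu (z : ℂ) : ℝ :=
  z.im / (‖z‖ ^ 2 * ‖z - 1‖ ^ 2)

noncomputable def Li2 (w : ℂ) : ℂ :=
  -∫ t in (0:ℝ)..1, Complex.log (1 - w * (t : ℂ)) / (t : ℂ)

section Aux

open Topology Filter Set intervalIntegral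

variable {w : ℂ}


-- basic nonvanishing
lemma aux_ne (hw : 0 < w.im) (x : ℝ) : 1 - w * x ≠ 0 := by
  rcases eq_or_ne x 0 with h | h
  · simp [h]
  · intro hc
    have : (1 - w * (x:ℂ)).im = 0 := by rw [hc]; simp
    simp [Complex.sub_im, Complex.mul_im] at this
    rcases this with h1 | h1 <;> simp_all [hw.ne']

lemma aux_branch (hw : 0 < w.im) (x : ℝ) : 0 < (1 - w * (x:ℂ)).re ∨ (1 - w * (x:ℂ)).im ≠ 0 := by
  rcases eq_or_ne x 0 with h | h
  · left; simp [h]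
  · right
    simp only [Complex.sub_im, Complex.mul_im, Complex.one_im, Complex.ofReal_re,
      Complex.ofReal_im, mul_zero, zero_add, add_zero, zero_sub, neg_ne_zero]
    simpa using mul_ne_zero hw.ne' h

-- derivative of x ↦ log(1-wx)
lemma aux_dlog (hw : 0 < w.im) (x : ℝ) :
    HasDerivAt (fun x : ℝ => Complex.log (1 - w * x)) (-w / (1 - w * x)) x := by
  have h1 : HasDerivAt (fun x : ℝ => 1 - w * (x:ℂ)) (-w) x := by
    have : HasDerivAt (fun x : ℝ => (x:ℂ)) 1 x := Complex.ofRealCLM.hasDerivAt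
    simpa using (this.const_mul w).const_sub 1
  exact h1.clog_real (aux_branch hw x)

noncomputable def ftil (w : ℂ) : ℝ → ℂ := fun s => if s = 0 then -w else Complex.log (1 - w * s) / s

lemma aux_ftil_cont (hw : 0 < w.im) : Continuous (ftil w) := by
  rw [continuous_iff_continuousAt]
  intro x
  rcases eq_or_ne x 0 with rfl | hx
  · have hd : HasDerivAt (fun s : ℝ => Complex.log (1 - w * s)) (-w) 0 := by
      simpa using aux_dlog hw 0
    have hs := hasDerivAt_iff_tendsto_slope.mp hd
    have heq : (fun s : ℝ => slope (fun s : ℝ => Complex.log (1 - w * s)) 0 s) =ᶠ[nhdsWithin (0:ℝ) {(0:ℝ)}ᶜ] ftil w := by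
      filter_upwards [self_mem_nhdsWithin] with s hs0
      simp only [Set.mem_compl_iff, Set.mem_singleton_iff] at hs0
      simp [slope, ftil, hs0, Complex.real_smul, div_eq_inv_mul]
    have h2 : Filter.Tendsto (ftil w) (𝓝[≠] (0:ℝ)) (𝓝 (-w)) := hs.congr' heq
    have : Filter.Tendsto (ftil w) (𝓝 (0:ℝ)) (𝓝 (-w)) := by
      rw [← nhdsNE_sup_pure 0]
      exact h2.sup (Filter.tendsto_pure_left.mpr fun s hs => by simpa [ftil] using mem_of_mem_nhds hs)
    simpa [ContinuousAt, ftil] using this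
  · have hc : ContinuousAt (fun s : ℝ => Complex.log (1 - w * s) / s) x := by
      apply ContinuousAt.div
      · exact ContinuousAt.clog (by fun_prop)
          (Complex.mem_slitPlane_iff.mpr (aux_branch hw x))
      · fun_prop
      · exact_mod_cast Complex.ofReal_ne_zero.mpr hx
    apply hc.congr
    filter_upwards [isOpen_ne.mem_nhds hx] with s hs
    simp [ftil, hs]

noncomputable def Jfun (w : ℂ) (x : ℝ) : ℂ := ∫ s in (0:ℝ)..x, ftil w s

noncomputable def Afun (w : ℂ) (x : ℝ) : ℝ := (Complex.log (1 - w * x)).im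

lemma aux_dJ (hw : 0 < w.im) (x : ℝ) : HasDerivAt (Jfun w) (ftil w x) x :=
  intervalIntegral.integral_hasDerivAt_right ((aux_ftil_cont hw).intervalIntegrable _ _)
    ((aux_ftil_cont hw).stronglyMeasurableAtFilter _ _) (aux_ftil_cont hw).continuousAt

lemma aux_dA (hw : 0 < w.im) (x : ℝ) :
    HasDerivAt (Afun w) ((-w / (1 - w * x)).im) x :=
  (Complex.imCLM.hasFDerivAt.comp_hasDerivAt x (aux_dlog hw x))

-- imaginary part of w/(1-wx)
lemma aux_im_div (hw : 0 < w.im) (x : ℝ) :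
    (w / (1 - w * x)).im = w.im / Complex.normSq (1 - w * x) := by
  rw [Complex.div_im]
  have : Complex.normSq (1 - w * x) ≠ 0 := Complex.normSq_pos.mpr (aux_ne hw x) |>.ne'
  field_simp
  simp only [Complex.sub_re, Complex.sub_im, Complex.one_re, Complex.one_im, Complex.mul_re,
    Complex.mul_im, Complex.ofReal_re, Complex.ofReal_im]
  ring

lemma aux_normSq_pos (hw : 0 < w.im) (x : ℝ) : 0 < Complex.normSq (1 - w * x) :=
  Complex.normSq_pos.mpr (aux_ne hw x)

noncomputable def hfun (w : ℂ) (x : ℝ) : ℝ :=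
  -((Real.log x + Real.log ‖w‖) * (w.im / Complex.normSq (1 - w * x)))

lemma aux_cont_c (hw : 0 < w.im) :
    Continuous (fun x : ℝ => w.im / Complex.normSq (1 - w * x)) := by
  apply continuous_const.div
  · exact Complex.continuous_normSq.comp (by fun_prop)
  · exact fun x => (aux_normSq_pos hw x).ne'

lemma aux_log_int : IntervalIntegrable Real.log MeasureTheory.volume 0 1 := by
  rw [intervalIntegrable_iff_integrableOn_Ioc_of_le zero_le_one]
  apply MeasureTheory.Integrable.mono' (g := fun x : ℝ => 2 * x ^ (-(1:ℝ)/2))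
  · have h := (intervalIntegrable_rpow' (a := 0) (b := 1) (r := -(1:ℝ)/2) (by norm_num)).const_mul 2
    rw [intervalIntegrable_iff_integrableOn_Ioc_of_le zero_le_one] at h
    exact h
  · exact Real.measurable_log.aestronglyMeasurable.restrict
  · refine (MeasureTheory.ae_restrict_iff' measurableSet_Ioc).mpr (Filter.Eventually.of_forall ?_)
    intro x hx
    have hx0 : 0 < x := hx.1
    have hx1 : x ≤ 1 := hx.2
    rw [Real.norm_eq_abs, abs_of_nonpos (Real.log_nonpos hx0.le hx1)]
    have h1 : -Real.log x = 2 * Real.log (x ^ (-(1:ℝ)/2)) := by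
      rw [Real.log_rpow hx0]; ring
    rw [h1]
    have h2 : Real.log (x ^ (-(1:ℝ)/2)) ≤ x ^ (-(1:ℝ)/2) := by
      have := Real.log_le_sub_one_of_pos (Real.rpow_pos_of_pos hx0 (-(1:ℝ)/2))
      linarith
    linarith

lemma aux_hInt : ∀ (hw : 0 < w.im), IntervalIntegrable (hfun w) MeasureTheory.volume 0 1 := by
  intro hw
  have h1 : IntervalIntegrable (fun x : ℝ => Real.log x + Real.log ‖w‖)
      MeasureTheory.volume 0 1 := aux_log_int.add intervalIntegrable_const
  have h2 := h1.mul_continuousOn (aux_cont_c hw).continuousOn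
  exact h2.neg

noncomputable def phi (w : ℂ) (x : ℝ) : ℝ :=
  (Real.log x + Real.log ‖w‖) * Afun w x - (Jfun w x).im

lemma aux_ftil_im (hw : 0 < w.im) {x : ℝ} (hx : x ≠ 0) :
    (ftil w x).im = x⁻¹ * Afun w x := by
  simp only [ftil, hx, if_false, Afun, Complex.div_im, Complex.ofReal_re, Complex.ofReal_im,
    Complex.normSq_ofReal]
  field_simp
  ring

lemma aux_dphi (hw : 0 < w.im) {x : ℝ} (hx : 0 < x) : HasDerivAt (phi w) (hfun w x) x := by
  have h1 : HasDerivAt (fun x : ℝ => Real.log x + Real.log ‖w‖) x⁻¹ x := by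
    simpa using (Real.hasDerivAt_log hx.ne').add_const (Real.log ‖w‖)
  have h2 := (h1.mul (aux_dA hw x)).sub
    (Complex.imCLM.hasFDerivAt.comp_hasDerivAt x (aux_dJ hw x))
  have heq : x⁻¹ * Afun w x + (Real.log x + Real.log ‖w‖) * (-w / (1 - w * x)).im
      - (Complex.imCLM) (ftil w x) = hfun w x := by
    have e1 : ((Complex.imCLM) (ftil w x) : ℝ) = x⁻¹ * Afun w x := by
      simpa using aux_ftil_im hw hx.ne'
    have e2 : (-w / (1 - w * x)).im = -(w.im / Complex.normSq (1 - w * x)) := by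
      rw [neg_div, Complex.neg_im, aux_im_div hw x]
    rw [e1, e2, hfun]; ring
  rw [← heq]
  exact h2

lemma aux_ftc (hw : 0 < w.im) {ε : ℝ} (hε : 0 < ε) (hε1 : ε ≤ 1) :
    ∫ x in ε..1, hfun w x = phi w 1 - phi w ε := by
  apply intervalIntegral.integral_eq_sub_of_hasDerivAt
  · intro x hx
    rw [Set.uIcc_of_le hε1] at hx
    exact aux_dphi hw (lt_of_lt_of_le hε hx.1)
  · refine (aux_hInt hw).mono_set ?_
    rw [Set.uIcc_of_le hε1, Set.uIcc_of_le zero_le_one]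
    exact Set.Icc_subset_Icc hε.le le_rfl

lemma aux_phi_zero (hw : 0 < w.im) : Filter.Tendsto (phi w) (𝓝[>] (0:ℝ)) (𝓝 0) := by
  have hT1 : Filter.Tendsto (fun ε : ℝ => (Jfun w ε).im) (𝓝[>] (0:ℝ)) (𝓝 0) := by
    have hc : ContinuousAt (fun ε : ℝ => (Jfun w ε).im) 0 :=
      (Complex.continuous_im.continuousAt).comp (aux_dJ hw 0).continuousAt
    have h0 : Jfun w 0 = 0 := by simp [Jfun]
    have := hc.tendsto
    rw [h0] at this
    simpa using this.mono_left nhdsWithin_le_nhds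
  have hslope : Filter.Tendsto (fun ε : ℝ => ε⁻¹ * Afun w ε) (𝓝[>] (0:ℝ)) (𝓝 ((-w).im)) := by
    have hd := aux_dA hw 0
    simp only [Complex.ofReal_zero, mul_zero, sub_zero, div_one] at hd
    have hs := hasDerivAt_iff_tendsto_slope.mp hd
    have heq : slope (Afun w) 0 = fun ε : ℝ => ε⁻¹ * Afun w ε := by
      funext ε
      have h0 : Afun w 0 = 0 := by simp [Afun]
      simp [slope, h0, div_eq_inv_mul]
    rw [heq] at hs
    exact hs.mono_left (nhdsWithin_mono 0 (fun x hx => ne_of_gt hx))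
  have hlog : Filter.Tendsto (fun ε : ℝ => Real.log ε * ε + Real.log ‖w‖ * ε)
      (𝓝[>] (0:ℝ)) (𝓝 0) := by
    have h1 : Filter.Tendsto (fun ε : ℝ => Real.log ε * ε) (𝓝[>] (0:ℝ)) (𝓝 0) := by
      have := tendsto_log_mul_rpow_nhdsGT_zero (r := 1) one_pos
      simpa [Real.rpow_one] using this
    have h2 : Filter.Tendsto (fun ε : ℝ => Real.log ‖w‖ * ε) (𝓝[>] (0:ℝ)) (𝓝 0) := by
      have : Filter.Tendsto (fun ε : ℝ => Real.log ‖w‖ * ε) (𝓝 (0:ℝ))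
          (𝓝 (Real.log ‖w‖ * 0)) := (continuous_const.mul continuous_id).tendsto 0
      simpa using this.mono_left nhdsWithin_le_nhds
    simpa using h1.add h2
  have hT2 : Filter.Tendsto (fun ε : ℝ => (Real.log ε + Real.log ‖w‖) * Afun w ε)
      (𝓝[>] (0:ℝ)) (𝓝 0) := by
    have := hlog.mul hslope
    rw [zero_mul] at this
    apply this.congr'
    filter_upwards [self_mem_nhdsWithin] with ε hε
    have hε0 : (ε:ℝ) ≠ 0 := ne_of_gt hε
    field_simp
  have := hT2.sub hT1
  rw [sub_zero] at this; exact this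

lemma aux_hInt_sub (hw : 0 < w.im) {a b : ℝ} (h0 : 0 ≤ a) (h1 : b ≤ 1) (hab : a ≤ b) :
    IntervalIntegrable (hfun w) MeasureTheory.volume a b := by
  refine (aux_hInt hw).mono_set ?_
  rw [Set.uIcc_of_le hab, Set.uIcc_of_le zero_le_one]
  exact Set.Icc_subset_Icc h0 h1

lemma aux_phi_eq (hw : 0 < w.im) : phi w 1 = ∫ x in (0:ℝ)..1, hfun w x := by
  have hIoo : Set.Ioo (0:ℝ) 1 ∈ 𝓝[>] (0:ℝ) := Ioo_mem_nhdsGT_of_mem (by norm_num)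
  have hP : Filter.Tendsto (fun ε : ℝ => ∫ x in (0:ℝ)..ε, hfun w x) (𝓝[>] (0:ℝ)) (𝓝 0) := by
    have hcont := intervalIntegral.continuousOn_primitive_interval
      (a := 0) (b := 1) (f := hfun w) (μ := MeasureTheory.volume) ?_
    · have h0 : ContinuousWithinAt (fun ε : ℝ => ∫ x in (0:ℝ)..ε, hfun w x) (Set.uIcc 0 1) 0 :=
        hcont 0 (by simp)
      have h00 : (∫ x in (0:ℝ)..(0:ℝ), hfun w x) = 0 := by simp
      have := h0.tendsto
      rw [h00] at this
      refine this.mono_left ?_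
      rw [Set.uIcc_of_le zero_le_one, ← nhdsWithin_Ioo_eq_nhdsGT (zero_lt_one)]
      exact nhdsWithin_mono 0 Set.Ioo_subset_Icc_self
    · rw [Set.uIcc_of_le zero_le_one]
      exact (intervalIntegrable_iff_integrableOn_Icc_of_le zero_le_one).mp (aux_hInt hw)
  have hI : Filter.Tendsto (fun ε : ℝ => ∫ x in ε..1, hfun w x) (𝓝[>] (0:ℝ))
      (𝓝 (∫ x in (0:ℝ)..1, hfun w x)) := by
    have := (tendsto_const_nhds (x := ∫ x in (0:ℝ)..1, hfun w x)
        (f := 𝓝[>] (0:ℝ))).sub hP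
    rw [sub_zero] at this
    apply this.congr'
    filter_upwards [hIoo] with ε hε
    have hadd := intervalIntegral.integral_add_adjacent_intervals
      (a := 0) (b := ε) (c := 1) (f := hfun w) (μ := MeasureTheory.volume)
      (aux_hInt_sub hw le_rfl hε.2.le hε.1.le)
      (aux_hInt_sub hw hε.1.le le_rfl hε.2.le)
    linarith
  have hphi1 : Filter.Tendsto (fun ε : ℝ => phi w ε + ∫ x in ε..1, hfun w x) (𝓝[>] (0:ℝ))
      (𝓝 (∫ x in (0:ℝ)..1, hfun w x)) := by
    have := (aux_phi_zero hw).add hI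
    simpa using this
  have heq : (fun ε : ℝ => phi w ε + ∫ x in ε..1, hfun w x) =ᶠ[𝓝[>] (0:ℝ)]
      (fun _ => phi w 1) := by
    filter_upwards [hIoo] with ε hε
    have := aux_ftc hw hε.1 hε.2.le
    linarith
  exact tendsto_nhds_unique (tendsto_const_nhds.congr' heq.symm) hphi1

lemma aux_abs_pos (hw : 0 < w.im) : 0 < ‖w‖ := by
  rw [norm_pos_iff]
  intro h; rw [h] at hw; simp at hw

lemma aux_hfun_pos (hw : 0 < w.im) {x : ℝ} (hx : 0 < x) (hxr : x * ‖w‖ < 1) :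
    0 < hfun w x := by
  have h1 : Real.log x + Real.log ‖w‖ < 0 := by
    rw [← Real.log_mul hx.ne' (aux_abs_pos hw).ne']
    exact Real.log_neg (mul_pos hx (aux_abs_pos hw)) hxr
  have h2 : 0 < w.im / Complex.normSq (1 - w * x) := div_pos hw (aux_normSq_pos hw x)
  rw [hfun]
  nlinarith

lemma aux_normSq_inv (hw : 0 < w.im) {x : ℝ} (hx : 0 < x) :
    ‖w‖ ^ 2 * x ^ 2 * Complex.normSq (1 - w * (((‖w‖^2 * x)⁻¹ : ℝ) : ℂ))
      = Complex.normSq (1 - w * x) := by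
  have hr2 : ‖w‖ ^ 2 = w.re ^ 2 + w.im ^ 2 := by
    rw [Complex.sq_norm, Complex.normSq_apply]; ring
  have hrx : (w.re ^ 2 + w.im ^ 2) * x ≠ 0 := by
    have : 0 < w.re ^ 2 + w.im ^ 2 := by nlinarith
    positivity
  simp only [Complex.normSq_apply, Complex.sub_re, Complex.sub_im, Complex.one_re,
    Complex.one_im, Complex.mul_re, Complex.mul_im, Complex.ofReal_re, Complex.ofReal_im,
    mul_zero, zero_mul, sub_zero, zero_sub, hr2]
  field_simp
  ring

lemma aux_hfun_contOn (hw : 0 < w.im) : ContinuousOn (hfun w) (Set.Ioi 0) := by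
  have h1 : ContinuousOn (fun x : ℝ => Real.log x + Real.log ‖w‖) (Set.Ioi 0) :=
    (Real.continuousOn_log.mono (fun x hx => ne_of_gt hx)).add continuousOn_const
  exact ((h1.mul (aux_cont_c hw).continuousOn).neg).congr (fun x _ => rfl)

lemma aux_subst (hw : 0 < w.im) (hr : 1 < ‖w‖) :
    ∫ x in (1/‖w‖)..1, hfun w x
      = ∫ x in (1/‖w‖)..(1/‖w‖^2), hfun w x := by
  set r := ‖w‖ with hrdef
  have hr0 : 0 < r := aux_abs_pos hw
  have hr1 : 1/r < 1 := by rw [div_lt_one hr0]; exact hr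
  have hr1' : 0 < 1/r := by positivity
  have key := intervalIntegral.integral_comp_smul_deriv'' (a := 1/r) (b := 1)
    (f := fun x => (r^2 * x)⁻¹) (f' := fun x => -(r^2 * x^2)⁻¹) (g := hfun w)
    ?_ ?_ ?_ ?_
  · have hfa : ((r^2 * (1/r))⁻¹ : ℝ) = 1/r := by field_simp
    have hfb : ((r^2 * (1:ℝ))⁻¹ : ℝ) = 1/r^2 := by field_simp
    rw [hfa, hfb] at key
    rw [← key]
    apply intervalIntegral.integral_congr
    intro x hx
    rw [Set.uIcc_of_le hr1.le] at hx
    have hx0 : 0 < x := lt_of_lt_of_le hr1' hx.1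
    have hy0 : (0:ℝ) < (r^2 * x)⁻¹ := by positivity
    have hns := aux_normSq_inv hw hx0
    have hlogy : Real.log ((r^2*x)⁻¹) = -(2 * Real.log r + Real.log x) := by
      rw [Real.log_inv, Real.log_mul (by positivity) hx0.ne', Real.log_pow]
      push_cast; ring
    have hnspos := aux_normSq_pos hw x
    have hnspos' := aux_normSq_pos hw ((r^2*x)⁻¹)
    simp only [Function.comp, smul_eq_mul, hfun, hlogy, hrdef]
    rw [← hrdef] at hns ⊢
    have hexp : Complex.normSq (1 - w * (((r^2*x)⁻¹ : ℝ) : ℂ))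
        = Complex.normSq (1 - w * x) / (r^2 * x^2) := by
      rw [← hns]; field_simp
    rw [hexp]
    have hx2 : (0:ℝ) < r^2*x^2 := by positivity
    field_simp
    rw [one_div, Real.log_inv, Real.log_mul (by positivity) hx0.ne', Real.log_pow]
    push_cast
    ring
  · apply ContinuousOn.inv₀
    · fun_prop
    · intro x hx
      rw [Set.uIcc_of_le hr1.le] at hx
      have : 0 < x := lt_of_lt_of_le hr1' hx.1
      positivity
  · intro x hx
    rw [min_eq_left hr1.le, max_eq_right hr1.le] at hx
    have hx0 : 0 < x := lt_trans hr1' hx.1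
    have hd : HasDerivAt (fun x : ℝ => (r^2 * x)⁻¹) (-(r^2*x^2)⁻¹) x := by
      have h1 : HasDerivAt (fun x : ℝ => r^2 * x) (r^2) x := by
        simpa using (hasDerivAt_id x).const_mul (r^2)
      have h2 := (hasDerivAt_inv (by positivity : r^2*x ≠ 0)).comp x h1
      refine h2.congr_deriv ?_
      field_simp
    exact (hd.hasDerivWithinAt)
  · apply ContinuousOn.neg
    apply ContinuousOn.inv₀
    · fun_prop
    · intro x hx
      rw [Set.uIcc_of_le hr1.le] at hx
      have : 0 < x := lt_of_lt_of_le hr1' hx.1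
      positivity
  · apply (aux_hfun_contOn hw).mono
    intro y hy
    obtain ⟨x, hx, rfl⟩ := hy
    rw [Set.uIcc_of_le hr1.le] at hx
    have : 0 < x := lt_of_lt_of_le hr1' hx.1
    have : (0:ℝ) < (r^2*x)⁻¹ := by positivity
    exact this

lemma aux_int_pos (hw : 0 < w.im) : 0 < ∫ x in (0:ℝ)..1, hfun w x := by
  set r := ‖w‖ with hrdef
  have hr0 : 0 < r := aux_abs_pos hw
  rcases le_or_gt r 1 with hr | hr
  · apply intervalIntegral.intervalIntegral_pos_of_pos_on (aux_hInt hw) _ zero_lt_one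
    intro x hx
    apply aux_hfun_pos hw hx.1
    nlinarith [hx.1, hx.2]
  · have h2 : (0:ℝ) < 1/r^2 := by positivity
    have h3 : (1:ℝ)/r^2 < 1/r := by
      rw [div_lt_div_iff₀ (by positivity) hr0]
      nlinarith
    have h4 : (1:ℝ)/r < 1 := by rw [div_lt_one hr0]; exact hr
    have e1 := intervalIntegral.integral_add_adjacent_intervals
      (a := (0:ℝ)) (b := 1/r^2) (c := 1/r) (f := hfun w) (μ := MeasureTheory.volume)
      (aux_hInt_sub hw le_rfl (by linarith) h2.le)
      (aux_hInt_sub hw h2.le (by linarith) h3.le)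
    have e2 := intervalIntegral.integral_add_adjacent_intervals
      (a := (0:ℝ)) (b := 1/r) (c := 1) (f := hfun w) (μ := MeasureTheory.volume)
      (aux_hInt_sub hw le_rfl h4.le (by linarith))
      (aux_hInt_sub hw (by linarith) le_rfl h4.le)
    have e3 := aux_subst hw hr
    have e4 : ∫ x in (1/r)..(1/r^2), hfun w x = -∫ x in (1/r^2)..(1/r), hfun w x :=
      intervalIntegral.integral_symm _ _
    have e5 : (∫ x in (0:ℝ)..1, hfun w x) = ∫ x in (0:ℝ)..(1/r^2), hfun w x := by
      rw [← e2, ← e1]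
      rw [← hrdef] at e3
      rw [e3, e4]
      ring
    rw [e5]
    apply intervalIntegral.intervalIntegral_pos_of_pos_on
      (aux_hInt_sub hw le_rfl (by linarith) h2.le) _ h2
    intro x hx
    apply aux_hfun_pos hw hx.1
    have : x * r < (1/r^2) * r := by
      apply mul_lt_mul_of_pos_right hx.2 hr0
    have : (1/r^2) * r = 1/r := by field_simp
    nlinarith [hx.2, mul_lt_mul_of_pos_right hx.2 hr0]


end Aux

theorem stmt_3 (w : ℂ) (hw : 0 < w.im) :
    0 < (Li2 w + (Real.log ‖w‖ : ℂ) * Complex.log (1 - w)).im := by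
  have hcongr : Jfun w 1 = ∫ t in (0:ℝ)..1, Complex.log (1 - w * (t:ℂ)) / (t:ℂ) := by
    apply intervalIntegral.integral_congr_ae
    apply Filter.Eventually.of_forall
    intro x hx
    rw [Set.uIoc_of_le zero_le_one] at hx
    simp [ftil, hx.1.ne']
  have key : (Li2 w + (Real.log ‖w‖ : ℂ) * Complex.log (1 - w)).im = phi w 1 := by
    rw [Li2, ← hcongr, phi]
    simp [Afun, Jfun, Complex.add_im, Complex.neg_im, Real.log_one]
    ring
  rw [key, aux_phi_eq hw]
  exact aux_int_pos hw
end

section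
/- For every complex number w, the integral over all of ℂ of log|z−w| · μ(z) with respect to Lebesgue measure equals the integral over the open unit disk {z : |z| < 1} of ( log|z−w| − log|1−w·z| ) · μ(z). (Reduction of the full-plane integral to the unit disk via the involution z ↦ 1/z.) -/
open MeasureTheory Complex Metric Set Filter

noncomputable def invD (u : ℂ) : ℂ →L[ℝ] ℂ :=
  ((-(u^2)⁻¹ : ℂ) • (1 : ℂ →L[ℂ] ℂ)).restrictScalars ℝ

lemma myHasFDerivAt_inv {u : ℂ} (hu : u ≠ 0) : HasFDerivAt (fun y : ℂ => y⁻¹) (invD u) u := by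
  have h := (hasDerivAt_inv hu).hasFDerivAt
  have e : (ContinuousLinearMap.toSpanSingleton ℂ (-(u^2)⁻¹)) =
      ((-(u^2)⁻¹ : ℂ) • (1 : ℂ →L[ℂ] ℂ)) := by
    ext; simp [mul_comm]
  rw [e] at h
  exact h.restrictScalars ℝ

lemma det_invD (u : ℂ) : (invD u).det = (normSq u ^ 2)⁻¹ := by
  have h1 : (invD u : ℂ →ₗ[ℝ] ℂ) = Algebra.lmul ℝ ℂ (-(u^2)⁻¹) := by
    apply LinearMap.ext; intro z; simp [invD]
  rw [ContinuousLinearMap.det, h1]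
  have h2 := Algebra.norm_complex_apply (-(u^2)⁻¹)
  rw [Algebra.norm_apply] at h2
  rw [h2]
  simp [map_pow]

lemma abs_det_invD (u : ℂ) : |(invD u).det| = (normSq u ^ 2)⁻¹ := by
  rw [det_invD]; exact abs_of_nonneg (by positivity)

lemma inv_image_eq (s : Set ℂ) : (Inv.inv '' s : Set ℂ) = Inv.inv ⁻¹' s :=
  congrFun (Set.image_eq_preimage_of_inverse inv_inv inv_inv) s

lemma integrableOn_inv_image {s : Set ℂ} (hs : MeasurableSet s) (h0 : (0:ℂ) ∉ s) (g : ℂ → ℝ) :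
    IntegrableOn g (Inv.inv '' s) ↔
      IntegrableOn (fun u => ((normSq u ^ 2)⁻¹ : ℝ) • g u⁻¹) s := by
  rw [integrableOn_image_iff_integrableOn_abs_det_fderiv_smul volume hs
    (fun u hu => (myHasFDerivAt_inv (fun h => h0 (h ▸ hu))).hasFDerivWithinAt)
    (inv_injective.injOn) g]
  simp only [abs_det_invD]

lemma integral_inv_image {s : Set ℂ} (hs : MeasurableSet s) (h0 : (0:ℂ) ∉ s) (g : ℂ → ℝ) :
    ∫ z in Inv.inv '' s, g z = ∫ u in s, ((normSq u ^ 2)⁻¹ : ℝ) • g u⁻¹ := by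
  rw [integral_image_eq_integral_abs_det_fderiv_smul volume hs
    (fun u hu => (myHasFDerivAt_inv (fun h => h0 (h ▸ hu))).hasFDerivWithinAt)
    (inv_injective.injOn) g]
  simp only [abs_det_invD]

lemma integrableOn_inv_add_image {s : Set ℂ} (hs : MeasurableSet s) (h0 : (0:ℂ) ∉ s) (p : ℂ)
    (g : ℂ → ℝ) :
    IntegrableOn g ((fun u : ℂ => u⁻¹ + p) '' s) ↔
      IntegrableOn (fun u => ((normSq u ^ 2)⁻¹ : ℝ) • g (u⁻¹ + p)) s := by
  rw [integrableOn_image_iff_integrableOn_abs_det_fderiv_smul volume hs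
    (fun u hu => ((myHasFDerivAt_inv (fun h => h0 (h ▸ hu))).add_const p).hasFDerivWithinAt)
    (fun u hu v hv huv => inv_injective (by simpa using huv)) g]
  simp only [abs_det_invD]

lemma image_inv_add (p : ℂ) (R : ℝ) (hR : 0 < R) :
    (fun u : ℂ => u⁻¹ + p) '' {u : ℂ | R⁻¹ < ‖u‖} = ball p R \ {p} := by
  ext z
  simp only [Set.mem_image, Set.mem_setOf_eq, Set.mem_diff, Metric.mem_ball,
    Set.mem_singleton_iff]
  constructor
  · rintro ⟨u, hu, rfl⟩
    have hu0 : u ≠ 0 := by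
      rintro rfl
      simp only [norm_zero] at hu
      exact absurd ((inv_pos.mpr hR).trans hu) (lt_irrefl 0)
    have habs : 0 < ‖u‖ := norm_pos_iff.mpr hu0
    constructor
    · rw [dist_eq, add_sub_cancel_right, norm_inv]
      exact (inv_lt_comm₀ habs hR).mpr hu
    · intro h
      rw [add_eq_right, inv_eq_zero] at h
      exact hu0 h
  · rintro ⟨hz, hzp⟩
    refine ⟨(z - p)⁻¹, ?_, by simp [sub_ne_zero.2 hzp]⟩
    rw [norm_inv]
    rw [dist_eq] at hz
    have : 0 < ‖z - p‖ := norm_pos_iff.mpr (sub_ne_zero.2 hzp)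
    exact inv_strictAnti₀ this hz

lemma measurable_abs_rpow (p : ℂ) (e : ℝ) :
    Measurable fun z : ℂ => ‖z - p‖ ^ e := by
  have heq : (fun z : ℂ => ‖z - p‖ ^ e) =
      Set.piecewise {p} (fun _ => (0:ℝ) ^ e)
        (fun z => Real.exp (Real.log (‖z - p‖) * e)) := by
    funext z
    by_cases h : z = p
    · rw [Set.piecewise_eq_of_mem _ _ _ (by simp [h])]
      simp [h]
    · rw [Set.piecewise_eq_of_notMem _ _ _ (by simp [h])]
      rw [Real.rpow_def_of_pos (norm_pos_iff.mpr (sub_ne_zero.2 h))]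
  rw [heq]
  exact Measurable.piecewise (measurableSet_singleton p) measurable_const
    (Real.measurable_exp.comp ((Real.measurable_log.comp
      ((continuous_norm.measurable).comp (measurable_id.sub_const p))).mul_const e))

lemma integrableOn_rpow_ball (p : ℂ) (R : ℝ) (hR : 0 < R) :
    IntegrableOn (fun z : ℂ => ‖z - p‖ ^ (-(3:ℝ)/2)) (ball p R) := by
  have hset : MeasurableSet {u : ℂ | R⁻¹ < ‖u‖} :=
    (isOpen_lt continuous_const continuous_norm).measurableSet
  have h0 : (0:ℂ) ∉ {u : ℂ | R⁻¹ < ‖u‖} := by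
    simp only [Set.mem_setOf_eq, norm_zero]
    exact ((inv_pos.mpr hR).le).not_gt
  have m5 : Measurable fun u : ℂ => ‖u‖ ^ (-(5:ℝ)/2) := by
    simpa using measurable_abs_rpow 0 (-(5:ℝ)/2)
  have key : IntegrableOn (fun z : ℂ => ‖z - p‖ ^ (-(3:ℝ)/2)) (ball p R \ {p}) := by
    rw [← image_inv_add p R hR, integrableOn_inv_add_image hset h0]
    have hcongr : ∀ u ∈ {u : ℂ | R⁻¹ < ‖u‖},
        ‖u‖ ^ (-(5:ℝ)/2) =
          ((normSq u ^ 2)⁻¹ : ℝ) • ‖u⁻¹ + p - p‖ ^ (-(3:ℝ)/2) := by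
      intro u hu
      have hu0 : u ≠ 0 := by
        rintro rfl; simp only [Set.mem_setOf_eq, norm_zero] at hu
        exact absurd ((inv_pos.mpr hR).trans hu) (lt_irrefl 0)
      have ha : 0 < ‖u‖ := norm_pos_iff.mpr hu0
      rw [add_sub_cancel_right, norm_inv, smul_eq_mul, ← Complex.sq_norm,
        Real.inv_rpow ha.le, ← Real.rpow_neg ha.le, ← pow_mul,
        ← Real.rpow_natCast (‖u‖) 4, ← Real.rpow_neg ha.le,
        ← Real.rpow_add ha]
      norm_num
    apply IntegrableOn.congr_fun _ hcongr hset
    have hfin : ((Module.finrank ℝ ℂ : ℝ)) < (5:ℝ)/2 := by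
      rw [Complex.finrank_real_complex]; norm_num
    have hint : Integrable (fun u : ℂ => (R+1) ^ ((5:ℝ)/2) * (1 + ‖u‖) ^ (-((5:ℝ)/2))) :=
      (integrable_one_add_norm hfin).const_mul _
    apply (hint.integrableOn).mono' m5.aestronglyMeasurable
    rw [ae_restrict_iff' hset]
    apply Eventually.of_forall
    intro u hu
    have hu' : R⁻¹ < ‖u‖ := hu
    have ha : 0 < ‖u‖ := lt_trans (inv_pos.mpr hR) hu'
    have hRa : 1 < R * ‖u‖ := by
      rw [← mul_inv_cancel₀ hR.ne']
      exact (mul_lt_mul_iff_right₀ hR).2 hu'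
    have h1 : 1 + ‖u‖ ≤ (R+1) * ‖u‖ := by
      nlinarith
    rw [Real.norm_eq_abs, _root_.abs_of_nonneg (Real.rpow_nonneg ha.le _)]
    calc ‖u‖ ^ (-(5:ℝ)/2)
        ≤ ((1 + ‖u‖)/(R+1)) ^ (-(5:ℝ)/2) := by
          apply Real.rpow_le_rpow_of_nonpos (by positivity) _ (by norm_num)
          rw [div_le_iff₀ (by linarith)]
          linarith [h1]
      _ = (R+1) ^ ((5:ℝ)/2) * (1 + ‖u‖) ^ (-((5:ℝ)/2)) := by
          have hnorm : (0:ℝ) ≤ 1 + ‖u‖ := by positivity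
          rw [show (-(5:ℝ)/2) = -((5:ℝ)/2) by norm_num,
            Real.rpow_neg (by positivity : (0:ℝ) ≤ (1+‖u‖)/(R+1)),
            Real.div_rpow hnorm (by linarith : (0:ℝ) ≤ R+1),
            Real.rpow_neg hnorm]
          field_simp
  have hdiff : (ball p R \ {p} : Set ℂ) =ᵐ[volume] ball p R := by
    refine MeasureTheory.diff_ae_eq_self.mpr ?_
    refine measure_mono_null ?_ (measure_singleton p)
    exact Set.inter_subset_right
  rwa [IntegrableOn, ← Measure.restrict_congr_set hdiff]


lemma log_abs_le (t M : ℝ) (ht : 0 ≤ t) (htM : t ≤ M) :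
    |Real.log t| ≤ 2 * t ^ (-(1:ℝ)/2) + M := by
  have hM : 0 ≤ M := ht.trans htM
  rcases eq_or_lt_of_le ht with h0 | h0
  · simp only [← h0, Real.log_zero, abs_zero]
    positivity
  rcases le_total t 1 with h1 | h1
  · have hlog : Real.log t ≤ 0 := Real.log_nonpos ht h1
    rw [abs_of_nonpos hlog]
    have key : Real.log (t ^ (-(1:ℝ)/2)) ≤ t ^ (-(1:ℝ)/2) - 1 :=
      Real.log_le_sub_one_of_pos (Real.rpow_pos_of_pos h0 _)
    rw [Real.log_rpow h0] at key
    nlinarith [Real.rpow_pos_of_pos h0 (-(1:ℝ)/2)]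
  · have hlog : 0 ≤ Real.log t := Real.log_nonneg h1
    rw [_root_.abs_of_nonneg hlog]
    have key : Real.log t ≤ t - 1 := Real.log_le_sub_one_of_pos h0
    have : (0:ℝ) ≤ 2 * t ^ (-(1:ℝ)/2) := by positivity
    linarith

lemma log_le_sqrt (t : ℝ) (ht : 1 ≤ t) : Real.log t ≤ 2 * t ^ ((1:ℝ)/2) := by
  have h0 : 0 < t := lt_of_lt_of_le one_pos ht
  have key : Real.log (t ^ ((1:ℝ)/2)) ≤ t ^ ((1:ℝ)/2) - 1 :=
    Real.log_le_sub_one_of_pos (Real.rpow_pos_of_pos h0 _)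
  rw [Real.log_rpow h0] at key
  nlinarith [Real.rpow_pos_of_pos h0 ((1:ℝ)/2)]

lemma key_prod (x y : ℝ) (hx : 0 ≤ x) (hy : 0 ≤ y) :
    x ^ (-(1:ℝ)/2) * y⁻¹ ≤ x ^ (-(3:ℝ)/2) + y ^ (-(3:ℝ)/2) := by
  rcases eq_or_lt_of_le hx with h0 | h0
  · rw [← h0, Real.zero_rpow (by norm_num), Real.zero_rpow (by norm_num), zero_mul]
    positivity
  rcases eq_or_lt_of_le hy with h0' | h0'
  · rw [← h0', inv_zero, mul_zero]
    positivity
  have e1 : x ^ (-(1:ℝ)/2) * x⁻¹ = x ^ (-(3:ℝ)/2) := by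
    rw [← Real.rpow_neg_one x, ← Real.rpow_add h0]; norm_num
  have e2 : y ^ (-(1:ℝ)/2) * y⁻¹ = y ^ (-(3:ℝ)/2) := by
    rw [← Real.rpow_neg_one y, ← Real.rpow_add h0']; norm_num
  rcases le_total x y with h | h
  · calc x ^ (-(1:ℝ)/2) * y⁻¹ ≤ x ^ (-(1:ℝ)/2) * x⁻¹ := by
          apply mul_le_mul_of_nonneg_left (inv_anti₀ h0 h) (by positivity)
      _ = x ^ (-(3:ℝ)/2) := e1
      _ ≤ _ := le_add_of_nonneg_right (by positivity)
  · calc x ^ (-(1:ℝ)/2) * y⁻¹ ≤ y ^ (-(1:ℝ)/2) * y⁻¹ := by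
          apply mul_le_mul_of_nonneg_right
            (Real.rpow_le_rpow_of_nonpos h0' h (by norm_num)) (by positivity)
      _ = y ^ (-(3:ℝ)/2) := e2
      _ ≤ _ := le_add_of_nonneg_left (by positivity)

lemma inv_le_one_add_rpow (x : ℝ) (hx : 0 ≤ x) : x⁻¹ ≤ 1 + x ^ (-(3:ℝ)/2) := by
  rcases eq_or_lt_of_le hx with h0 | h0
  · rw [← h0, inv_zero]; positivity
  rcases le_total x 1 with h1 | h1
  · have : x⁻¹ = x ^ (-(1:ℝ)) := (Real.rpow_neg_one x).symm
    rw [this]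
    have := Real.rpow_le_rpow_of_exponent_ge h0 h1 (by norm_num : (-(3:ℝ)/2) ≤ -1)
    linarith
  · have : x⁻¹ ≤ 1 := by
      rw [inv_le_one_iff₀]; right; exact h1
    have h2 : (0:ℝ) ≤ x ^ (-(3:ℝ)/2) := by positivity
    linarith

lemma abs_mu_le (z : ℂ) :
    |mu z| ≤ 4 * (‖z‖)⁻¹ + 4 * (‖z - 1‖)⁻¹ := by
  set a := ‖z‖ with ha
  set b := ‖z - 1‖ with hb
  have ha0 : 0 ≤ a := norm_nonneg z
  have hb0 : 0 ≤ b := norm_nonneg _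
  rcases eq_or_lt_of_le ha0 with h0 | h0
  · have : z = 0 := by
      have := norm_eq_zero.mp h0.symm; exact this
    simp [mu, this]
    positivity
  rcases eq_or_lt_of_le hb0 with h0' | h0'
  · have hz1 : z = 1 := by
      have := norm_eq_zero.mp h0'.symm
      linear_combination this
    simp [mu, hz1]
    positivity
  have him_a : |z.im| ≤ a := Complex.abs_im_le_norm z
  have him_b : |z.im| ≤ b := by
    have : (z - 1).im = z.im := by simp
    rw [← this]; exact Complex.abs_im_le_norm (z - 1)
  have htri : 1 ≤ a + b := by
    have h := norm_add_le z (1 - z)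
    have e : z + (1 - z) = 1 := by ring
    rw [e, norm_one, norm_sub_rev] at h
    exact h
  have hmu : |mu z| = |z.im| / (a^2 * b^2) := by
    rw [mu, abs_div, _root_.abs_of_nonneg
      (by positivity : (0:ℝ) ≤ ‖z‖ ^ 2 * ‖z - 1‖ ^ 2)]
  rw [hmu, div_le_iff₀ (by positivity)]
  have e : (4 * a⁻¹ + 4 * b⁻¹) * (a ^ 2 * b ^ 2) = 4*a*b^2 + 4*a^2*b := by
    field_simp
  rw [e]
  rcases le_total a b with hab | hab
  · have hbhalf : 1 ≤ 2 * b := by linarith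
    nlinarith [mul_nonneg (mul_nonneg ha0 hb0) (by linarith : (0:ℝ) ≤ a + b - 1),
      mul_nonneg ha0 (by linarith : (0:ℝ) ≤ 2*b - 1), him_a, abs_nonneg z.im]
  · have hahalf : 1 ≤ 2 * a := by linarith
    nlinarith [mul_nonneg (mul_nonneg ha0 hb0) (by linarith : (0:ℝ) ≤ a + b - 1),
      mul_nonneg hb0 (by linarith : (0:ℝ) ≤ 2*a - 1), him_b, abs_nonneg z.im]

lemma abs_sub_le' (x y : ℂ) : ‖x - y‖ ≤ ‖x‖ + ‖y‖ := by
  have h := norm_add_le x (-y)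
  rw [← sub_eq_add_neg] at h
  simpa [map_neg] using h

lemma measurable_mu : Measurable mu := by
  apply Complex.measurable_im.div
  exact ((continuous_norm.measurable).pow_const 2).mul
    (((continuous_norm.measurable).comp (measurable_id.sub_const 1)).pow_const 2)

lemma measurable_logF (w : ℂ) :
    Measurable (fun z : ℂ => Real.log (‖z - w‖) * mu z) :=
  (Real.measurable_log.comp
    ((continuous_norm.measurable).comp (measurable_id.sub_const w))).mul measurable_mu

lemma integrableOn_logF_closedBall (w : ℂ) (R : ℝ) (hR : 1 ≤ R) :
    IntegrableOn (fun z : ℂ => Real.log (‖z - w‖) * mu z)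
      (closedBall (0:ℂ) R) := by
  set M : ℝ := R + ‖w‖ + 1 with hM
  have hM0 : 0 ≤ M := by positivity
  set C : ℝ := 8 * M + 16 with hC
  have hsub : ∀ p : ℂ, closedBall (0:ℂ) R ⊆ ball p (R + ‖p‖ + 1) := by
    intro p z hz
    rw [mem_closedBall, dist_zero_right] at hz
    rw [mem_ball, Complex.dist_eq]
    calc ‖z - p‖ ≤ ‖z‖ + ‖p‖ := abs_sub_le' z p
      _ ≤ R + ‖p‖ := by linarith
      _ < R + ‖p‖ + 1 := by linarith
  have hrpow : ∀ p : ℂ,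
      IntegrableOn (fun z : ℂ => ‖z - p‖ ^ (-(3:ℝ)/2)) (closedBall (0:ℂ) R) :=
    fun p => (integrableOn_rpow_ball p (R + ‖p‖ + 1) (by positivity)).mono_set (hsub p)
  have hdom : IntegrableOn (fun z : ℂ =>
      C * (1 + ‖z‖ ^ (-(3:ℝ)/2) + ‖z - 1‖ ^ (-(3:ℝ)/2)
        + ‖z - w‖ ^ (-(3:ℝ)/2))) (closedBall (0:ℂ) R) := by
    apply Integrable.const_mul
    have h0 : IntegrableOn (fun z : ℂ => ‖z‖ ^ (-(3:ℝ)/2)) (closedBall (0:ℂ) R) := by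
      have := hrpow 0
      simpa using this
    exact (((integrableOn_const (C := (1:ℝ)) measure_closedBall_lt_top.ne).add h0).add
      (hrpow 1)).add (hrpow w)
  apply hdom.mono' (measurable_logF w).aestronglyMeasurable
  rw [ae_restrict_iff' measurableSet_closedBall]
  apply Eventually.of_forall
  intro z hz
  rw [mem_closedBall, dist_zero_right] at hz
  set t : ℝ := ‖z - w‖ with htdef
  set a : ℝ := ‖z‖ with hadef
  set b : ℝ := ‖z - 1‖ with hbdef
  have ht0 : 0 ≤ t := norm_nonneg _
  have ha0 : 0 ≤ a := norm_nonneg _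
  have hb0 : 0 ≤ b := norm_nonneg _
  have htM : t ≤ M := by
    calc t ≤ ‖z‖ + ‖w‖ := abs_sub_le' z w
      _ ≤ R + ‖w‖ := by linarith
      _ ≤ M := by rw [hM]; linarith
  have h1 : ‖Real.log t * mu z‖ ≤ (2 * t ^ (-(1:ℝ)/2) + M) * (4 * a⁻¹ + 4 * b⁻¹) := by
    rw [norm_mul, Real.norm_eq_abs, Real.norm_eq_abs]
    apply mul_le_mul (log_abs_le t M ht0 htM) (abs_mu_le z) (abs_nonneg _) (by positivity)
  have h2 : (2 * t ^ (-(1:ℝ)/2) + M) * (4 * a⁻¹ + 4 * b⁻¹) =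
      8 * (t ^ (-(1:ℝ)/2) * a⁻¹) + 8 * (t ^ (-(1:ℝ)/2) * b⁻¹)
        + 4 * M * a⁻¹ + 4 * M * b⁻¹ := by ring
  have hpa := key_prod t a ht0 ha0
  have hpb := key_prod t b ht0 hb0
  have hia := inv_le_one_add_rpow a ha0
  have hib := inv_le_one_add_rpow b hb0
  have hta : (0:ℝ) ≤ t ^ (-(3:ℝ)/2) := Real.rpow_nonneg ht0 _
  have haa : (0:ℝ) ≤ a ^ (-(3:ℝ)/2) := Real.rpow_nonneg ha0 _
  have hbb : (0:ℝ) ≤ b ^ (-(3:ℝ)/2) := Real.rpow_nonneg hb0 _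
  calc ‖Real.log t * mu z‖
      ≤ (2 * t ^ (-(1:ℝ)/2) + M) * (4 * a⁻¹ + 4 * b⁻¹) := h1
    _ ≤ C * (1 + a ^ (-(3:ℝ)/2) + b ^ (-(3:ℝ)/2) + t ^ (-(3:ℝ)/2)) := by
        rw [h2, hC]
        nlinarith [mul_le_mul_of_nonneg_left hia (by linarith : (0:ℝ) ≤ 4*M),
          mul_le_mul_of_nonneg_left hib (by linarith : (0:ℝ) ≤ 4*M)]

lemma integrableOn_logF_tail (w : ℂ) :
    IntegrableOn (fun z : ℂ => Real.log (‖z - w‖) * mu z)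
      (closedBall (0:ℂ) (2 * ‖w‖ + 4))ᶜ := by
  set R : ℝ := 2 * ‖w‖ + 4 with hRdef
  have hfin : ((Module.finrank ℝ ℂ : ℝ)) < (5:ℝ)/2 := by
    rw [Complex.finrank_real_complex]; norm_num
  have hint : Integrable (fun u : ℂ => 128 * (1 + ‖u‖) ^ (-((5:ℝ)/2))) :=
    (integrable_one_add_norm hfin).const_mul _
  apply (hint.integrableOn).mono' (measurable_logF w).aestronglyMeasurable
  rw [ae_restrict_iff' measurableSet_closedBall.compl]
  apply Eventually.of_forall
  intro z hz
  simp only [Set.mem_compl_iff, mem_closedBall, dist_zero_right,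
    not_le] at hz
  set t : ℝ := ‖z - w‖ with htdef
  set a : ℝ := ‖z‖ with hadef
  set b : ℝ := ‖z - 1‖ with hbdef
  have hw0 : 0 ≤ ‖w‖ := norm_nonneg _
  have ha4 : 4 < a := by rw [hadef]; linarith [hz]
  have ha0 : 0 < a := by linarith
  have ht1 : 1 ≤ t := by
    have h := abs_sub_le' (z - w) (-w)
    have e : z - w - -w = z := by ring
    rw [e, norm_neg] at h
    have h' : a ≤ t + ‖w‖ := h
    linarith [hz]
  have ht2a : t ≤ 2 * a := by
    calc t ≤ ‖z‖ + ‖w‖ := abs_sub_le' z w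
      _ ≤ 2 * a := by rw [hadef]; linarith [hz]
  have hb : a / 2 ≤ b := by
    have h := abs_sub_le' (z - 1) (-1)
    have e : z - 1 - -1 = z := by ring
    rw [e, norm_neg, norm_one] at h
    have hab1 : a ≤ b + 1 := h
    linarith
  have hb0 : 0 < b := by linarith
  -- |mu z| ≤ 4 * a^(-3)
  have hmu : |mu z| ≤ 4 / a ^ 3 := by
    have him : |z.im| ≤ a := Complex.abs_im_le_norm z
    have hmueq : |mu z| = |z.im| / (a^2 * b^2) := by
      rw [mu, abs_div, _root_.abs_of_nonneg
        (by positivity : (0:ℝ) ≤ ‖z‖ ^ 2 * ‖z - 1‖ ^ 2)]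
    rw [hmueq, div_le_div_iff₀ (by positivity) (by positivity)]
    have hab : a ≤ 2 * b := by linarith
    have h2 : a^2 ≤ 4*b^2 := by nlinarith
    nlinarith [mul_le_mul_of_nonneg_right him (by positivity : (0:ℝ) ≤ a^3),
      mul_le_mul_of_nonneg_left h2 (by positivity : (0:ℝ) ≤ a^2)]
  -- |log t| ≤ 4 * a^(1/2)
  have hlog : |Real.log t| ≤ 4 * a ^ ((1:ℝ)/2) := by
    rw [_root_.abs_of_nonneg (Real.log_nonneg ht1)]
    calc Real.log t ≤ 2 * t ^ ((1:ℝ)/2) := log_le_sqrt t ht1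
      _ ≤ 2 * (2*a) ^ ((1:ℝ)/2) := by
          apply mul_le_mul_of_nonneg_left
            (Real.rpow_le_rpow (by linarith) ht2a (by norm_num)) (by norm_num)
      _ = 2 * 2 ^ ((1:ℝ)/2) * a ^ ((1:ℝ)/2) := by
          rw [Real.mul_rpow (by norm_num) ha0.le]; ring
      _ ≤ 4 * a ^ ((1:ℝ)/2) := by
          have h2 : (2:ℝ) ^ ((1:ℝ)/2) ≤ 2 := by
            calc (2:ℝ) ^ ((1:ℝ)/2) ≤ (2:ℝ) ^ (1:ℝ) :=
                Real.rpow_le_rpow_of_exponent_le (by norm_num) (by norm_num)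
              _ = 2 := Real.rpow_one 2
          have := Real.rpow_nonneg ha0.le ((1:ℝ)/2)
          nlinarith
  have key : ‖Real.log t * mu z‖ ≤ 16 * a ^ (-((5:ℝ)/2)) := by
    rw [norm_mul, Real.norm_eq_abs, Real.norm_eq_abs]
    calc |Real.log t| * |mu z| ≤ (4 * a ^ ((1:ℝ)/2)) * (4 / a ^ 3) := by
          apply mul_le_mul hlog hmu (abs_nonneg _) (by positivity)
      _ = 16 * a ^ (-((5:ℝ)/2)) := by
          rw [show (-((5:ℝ)/2)) = (1:ℝ)/2 + (-(3:ℝ)) by norm_num,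
            Real.rpow_add ha0, Real.rpow_neg ha0.le,
            show ((3:ℝ)) = ((3:ℕ):ℝ) by norm_num, Real.rpow_natCast]
          field_simp
          ring
  calc ‖Real.log t * mu z‖ ≤ 16 * a ^ (-((5:ℝ)/2)) := key
    _ ≤ 128 * (1 + ‖z‖) ^ (-((5:ℝ)/2)) := by
        have h1a : 1 + a ≤ 2 * a := by linarith
        have hnz : ‖z‖ = a := rfl
        rw [hnz]
        have hstep : (1 + a) ^ (-((5:ℝ)/2)) ≥ (2*a) ^ (-((5:ℝ)/2)) :=
          Real.rpow_le_rpow_of_nonpos (by linarith) h1a (by norm_num)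
        have he : (2*a) ^ (-((5:ℝ)/2)) = 2 ^ (-((5:ℝ)/2)) * a ^ (-((5:ℝ)/2)) :=
          Real.mul_rpow (by norm_num) ha0.le
        have hc : (8:ℝ) * 2 ^ (-((5:ℝ)/2)) ≥ 1 := by
          have : (2:ℝ) ^ ((5:ℝ)/2) ≤ 2 ^ (3:ℝ) :=
            Real.rpow_le_rpow_of_exponent_le (by norm_num) (by norm_num)
          have h8 : (2:ℝ) ^ (3:ℝ) = 8 := by
            rw [show (3:ℝ) = ((3:ℕ):ℝ) by norm_num, Real.rpow_natCast]; norm_num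
          rw [ge_iff_le, show (1:ℝ) = 2 ^ ((5:ℝ)/2) * 2 ^ (-((5:ℝ)/2)) by
            rw [← Real.rpow_add (by norm_num)]; norm_num]
          apply mul_le_mul_of_nonneg_right _ (Real.rpow_nonneg (by norm_num) _)
          linarith
        calc (16:ℝ) * a ^ (-((5:ℝ)/2))
            ≤ 16 * (8 * 2 ^ (-((5:ℝ)/2))) * a ^ (-((5:ℝ)/2)) := by
              nlinarith [Real.rpow_nonneg ha0.le (-((5:ℝ)/2)),
                Real.rpow_nonneg (show (0:ℝ) ≤ 2 by norm_num) (-((5:ℝ)/2))]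
          _ = 128 * ((2*a) ^ (-((5:ℝ)/2))) := by rw [he]; ring
          _ ≤ 128 * (1 + a) ^ (-((5:ℝ)/2)) := by
              apply mul_le_mul_of_nonneg_left hstep (by norm_num)

lemma integrable_logF (w : ℂ) :
    Integrable (fun z : ℂ => Real.log (‖z - w‖) * mu z) := by
  rw [← integrableOn_univ, ← Set.union_compl_self (closedBall (0:ℂ) (2 * ‖w‖ + 4))]
  exact (integrableOn_logF_closedBall w _
    (by have := norm_nonneg w; linarith)).union (integrableOn_logF_tail w)

lemma mu_conj (u : ℂ) : mu ((starRingEnd ℂ) u) = -mu u := by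
  have e : (starRingEnd ℂ) u - 1 = (starRingEnd ℂ) (u - 1) := by rw [map_sub, map_one]
  rw [mu, mu, Complex.conj_im, e, Complex.norm_conj, Complex.norm_conj, neg_div]

lemma integral_log_mu_ball_zero :
    ∫ u in ball (0:ℂ) 1, Real.log (‖u‖) * mu u = 0 := by
  have emb : MeasurableEmbedding (fun z : ℂ => (starRingEnd ℂ) z) :=
    Complex.conjLIE.toHomeomorph.measurableEmbedding
  have hpre : (fun z : ℂ => (starRingEnd ℂ) z) ⁻¹' (ball (0:ℂ) 1) = ball (0:ℂ) 1 := by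
    ext z
    simp [mem_ball_zero_iff, Complex.norm_conj]
  have h := Complex.conjLIE.measurePreserving.setIntegral_preimage_emb emb
    (fun u => Real.log (‖u‖) * mu u) (ball (0:ℂ) 1)
  have hLIE : ∀ z : ℂ, Complex.conjLIE z = (starRingEnd ℂ) z := fun z => rfl
  rw [show (⇑Complex.conjLIE : ℂ → ℂ) = (fun z : ℂ => (starRingEnd ℂ) z) from rfl] at h
  rw [hpre] at h
  have h2 : ∫ u in ball (0:ℂ) 1, Real.log (‖(starRingEnd ℂ) u‖) *
      mu ((starRingEnd ℂ) u) = ∫ u in ball (0:ℂ) 1, -(Real.log (‖u‖) * mu u) := by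
    apply setIntegral_congr_fun measurableSet_ball
    intro u _
    simp only [Complex.norm_conj, mu_conj]
    ring
  rw [h2, integral_neg] at h
  linarith

lemma inv_smul_identity (w u : ℂ) (hu : u ≠ 0) (hwu : 1 - w * u ≠ 0) :
    ((normSq u ^ 2)⁻¹ : ℝ) • (Real.log (‖u⁻¹ - w‖) * mu u⁻¹)
      = (Real.log (‖u‖) - Real.log (‖1 - w * u‖)) * mu u := by
  have ha : 0 < ‖u‖ := norm_pos_iff.mpr hu
  have hlog : Real.log (‖u⁻¹ - w‖) =
      Real.log (‖1 - w*u‖) - Real.log (‖u‖) := by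
    have e : u⁻¹ - w = (1 - w*u) * u⁻¹ := by field_simp
    rw [e, norm_mul, norm_inv,
      Real.log_mul (norm_pos_iff.mpr hwu).ne' (inv_ne_zero ha.ne'), Real.log_inv]
    ring
  have hmu : ((normSq u ^ 2)⁻¹ : ℝ) * mu u⁻¹ = - mu u := by
    rcases eq_or_ne u 1 with h1 | h1
    · subst h1; simp [mu]
    · have hb : 0 < ‖u - 1‖ := norm_pos_iff.mpr (sub_ne_zero.2 h1)
      have e : u⁻¹ - 1 = (1 - u) * u⁻¹ := by field_simp
      rw [mu, mu, Complex.inv_im, e, norm_mul, norm_inv, norm_sub_rev (1:ℂ) u,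
        ← Complex.sq_norm]
      field_simp
  rw [smul_eq_mul, hlog]
  have e2 : (normSq u ^ 2)⁻¹ *
      ((Real.log (‖1 - w*u‖) - Real.log (‖u‖)) * mu u⁻¹)
      = (Real.log (‖1 - w*u‖) - Real.log (‖u‖))
        * ((normSq u ^ 2)⁻¹ * mu u⁻¹) := by ring
  rw [e2, hmu]
  ring

theorem stmt_8 (w : ℂ) :
    ∫ z : ℂ, Real.log ‖z - w‖ * mu z =
      ∫ z in {z : ℂ | ‖z‖ < 1},
        (Real.log ‖z - w‖ - Real.log ‖1 - w * z‖) * mu z := by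
  have hball : {z : ℂ | ‖z‖ < 1} = ball (0:ℂ) 1 := by
    ext z; simp [mem_ball_zero_iff]
  rw [hball]
  set F : ℂ → ℝ := fun z => Real.log (‖z - w‖) * mu z with hF
  have hIntF : Integrable F := integrable_logF w
  have hsplit := integral_add_compl (measurableSet_ball :
    MeasurableSet (ball (0:ℂ) 1)) hIntF
  have hext : ((ball (0:ℂ) 1)ᶜ : Set ℂ) =ᵐ[volume] {z : ℂ | 1 < ‖z‖} := by
    rw [ae_eq_set]
    constructor
    · apply measure_mono_null _ (Measure.addHaar_sphere volume (0:ℂ) 1)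
      rintro z ⟨h1, h2⟩
      simp only [Set.mem_compl_iff, mem_ball_zero_iff, not_lt] at h1
      simp only [Set.mem_setOf_eq, not_lt] at h2
      simp only [mem_sphere, Complex.dist_eq, sub_zero]
      exact le_antisymm h2 h1
    · apply measure_mono_null _ (Measure.addHaar_sphere volume (0:ℂ) 1)
      rintro z ⟨h1, h2⟩
      simp only [Set.mem_setOf_eq] at h1
      simp only [Set.mem_compl_iff, not_not, mem_ball_zero_iff] at h2
      exact absurd (h1.trans h2) (lt_irrefl 1)
  set s : Set ℂ := ball (0:ℂ) 1 \ {0} with hs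
  have hsmeas : MeasurableSet s := measurableSet_ball.diff (measurableSet_singleton 0)
  have h0s : (0:ℂ) ∉ s := fun h => h.2 rfl
  have himg : Inv.inv '' s = {z : ℂ | 1 < ‖z‖} := by
    have h1 : s = (fun u : ℂ => u⁻¹ + 0) '' {u : ℂ | (1:ℝ)⁻¹ < ‖u‖} := by
      rw [image_inv_add 0 1 one_pos]
    rw [h1, Set.image_image]
    have h2 : (fun u : ℂ => (u⁻¹ + 0)⁻¹) = fun u : ℂ => u := by
      funext u; simp
    rw [h2, Set.image_id']
    norm_num
  have htrans : ∫ z in {z : ℂ | 1 < ‖z‖}, F z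
      = ∫ u in s, ((normSq u ^ 2)⁻¹ : ℝ) • F u⁻¹ := by
    rw [← himg]; exact integral_inv_image hsmeas h0s F
  have hIs : IntegrableOn (fun u => ((normSq u ^ 2)⁻¹ : ℝ) • F u⁻¹) s := by
    rw [← integrableOn_inv_image hsmeas h0s F, himg]
    exact hIntF.integrableOn
  set g₂ : ℂ → ℝ := fun u =>
    (Real.log (‖u‖) - Real.log (‖1 - w * u‖)) * mu u with hg₂
  have hae : (fun u => ((normSq u ^ 2)⁻¹ : ℝ) • F u⁻¹) =ᵐ[volume] g₂ := by
    have hN : volume ({0, w⁻¹} : Set ℂ) = 0 :=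
      (Set.toFinite ({0, w⁻¹} : Set ℂ)).measure_zero volume
    have hsub : {u : ℂ | ¬ (((normSq u ^ 2)⁻¹ : ℝ) • F u⁻¹ = g₂ u)} ⊆ ({0, w⁻¹} : Set ℂ) := by
      intro u hu
      by_contra hmem
      simp only [Set.mem_insert_iff, Set.mem_singleton_iff, not_or] at hmem
      obtain ⟨hu0, huw⟩ := hmem
      apply hu
      have hwu : 1 - w * u ≠ 0 := by
        intro hzero
        have hw0 : w ≠ 0 := by
          intro h; rw [h, zero_mul, sub_zero] at hzero; exact one_ne_zero hzero
        apply huw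
        have : w * u = 1 := by linear_combination -hzero
        field_simp
        linear_combination this
      have := inv_smul_identity w u hu0 hwu
      simp only [hF, hg₂]
      rw [show u⁻¹ - w = u⁻¹ - w from rfl]
      exact this
    exact ae_iff.mpr (measure_mono_null hsub hN)
  have hsae : (s : Set ℂ) =ᵐ[volume] ball (0:ℂ) 1 := by
    refine diff_ae_eq_self.mpr ?_
    refine measure_mono_null ?_ (measure_singleton (0:ℂ))
    exact Set.inter_subset_right
  have hIg₂ : IntegrableOn g₂ (ball (0:ℂ) 1) := by
    rw [IntegrableOn, ← Measure.restrict_congr_set hsae]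
    exact hIs.congr (ae_restrict_of_ae hae)
  have hEq1 : ∫ z in {z : ℂ | 1 < ‖z‖}, F z = ∫ u in ball (0:ℂ) 1, g₂ u := by
    rw [htrans, integral_congr_ae (ae_restrict_of_ae hae), setIntegral_congr_set hsae]
  have hIB : IntegrableOn (fun u : ℂ => Real.log (‖u‖) * mu u) (ball (0:ℂ) 1) := by
    have h := integrableOn_logF_closedBall 0 1 le_rfl
    simp only [sub_zero] at h
    exact h.mono_set ball_subset_closedBall
  have hIA : IntegrableOn (fun u : ℂ => Real.log (‖1 - w * u‖) * mu u)
      (ball (0:ℂ) 1) := by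
    have hsub' : IntegrableOn
        ((fun u : ℂ => Real.log (‖u‖) * mu u) - g₂) (ball (0:ℂ) 1) :=
      hIB.sub hIg₂
    refine hsub'.congr_fun (fun u _ => ?_) measurableSet_ball
    simp only [Pi.sub_apply, hg₂]
    ring
  have hsplit2 : ∫ u in ball (0:ℂ) 1, g₂ u
      = - ∫ u in ball (0:ℂ) 1, Real.log (‖1 - w * u‖) * mu u := by
    have e : ∫ u in ball (0:ℂ) 1, g₂ u
        = (∫ u in ball (0:ℂ) 1, Real.log (‖u‖) * mu u)
          - ∫ u in ball (0:ℂ) 1, Real.log (‖1 - w * u‖) * mu u := by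
      rw [← integral_sub hIB hIA]
      apply setIntegral_congr_fun measurableSet_ball
      intro u _
      simp only [hg₂]
      ring
    rw [e, integral_log_mu_ball_zero]
    ring
  rw [← hsplit, setIntegral_congr_set hext, hEq1, hsplit2, ← sub_eq_add_neg,
    ← integral_sub hIntF.integrableOn hIA]
  apply setIntegral_congr_fun measurableSet_ball
  intro u _
  simp only [hF]
  ring
end

section
/- For every integer m ≥ 1 and every real number r with 0 < r < 1, the integral over the annulus {z ∈ ℂ : r < |z| < 1} of z^{−m} · μ(z) with respect to Lebesgue measure equals iπ·log r; in particular the value is independent of m. -/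
open MeasureTheory Complex

namespace helper
open Real


lemma sphere_ne_zero {ρ : ℝ} (hρ0 : 0 < ρ) {z : ℂ} (hz : z ∈ Metric.sphere (0:ℂ) ρ) : z ≠ 0 := by
  intro h
  rw [Metric.mem_sphere, dist_eq_norm, h] at hz
  simp at hz
  exact hρ0.ne' hz.symm

lemma abs_of_sphere {ρ : ℝ} {z : ℂ} (hz : z ∈ Metric.sphere (0:ℂ) ρ) : ‖z‖ = ρ := by
  rw [Metric.mem_sphere, dist_eq_norm, sub_zero] at hz
  exact hz

lemma ci_pow (ρ : ℝ) (hρ0 : 0 < ρ) (k : ℤ) : CircleIntegrable (fun z => z ^ k) 0 ρ := by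
  refine ContinuousOn.circleIntegrable hρ0.le ?_
  intro z hz
  exact (continuousAt_zpow₀ _ _ (Or.inl (sphere_ne_zero hρ0 hz))).continuousWithinAt

lemma ci_mul (ρ : ℝ) (hρ0 : 0 < ρ) (k : ℤ) (w : ℂ) (hw : w ∉ Metric.sphere (0:ℂ) ρ) :
    CircleIntegrable (fun z => z ^ k * (z - w)⁻¹) 0 ρ := by
  refine ContinuousOn.circleIntegrable hρ0.le ?_
  intro z hz
  have hzw : z - w ≠ 0 := sub_ne_zero.2 (ne_of_mem_of_not_mem hz hw)
  exact ((continuousAt_zpow₀ _ _ (Or.inl (sphere_ne_zero hρ0 hz))).mul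
    (((continuousAt_id.sub continuousAt_const)).inv₀ hzw)).continuousWithinAt

lemma ci_inv (ρ : ℝ) (hρ0 : 0 < ρ) (w : ℂ) (hw : w ∉ Metric.sphere (0:ℂ) ρ) :
    CircleIntegrable (fun z => (z - w)⁻¹) 0 ρ := by
  refine ContinuousOn.circleIntegrable hρ0.le ?_
  intro z hz
  have hzw : z - w ≠ 0 := sub_ne_zero.2 (ne_of_mem_of_not_mem hz hw)
  exact (((continuousAt_id.sub continuousAt_const)).inv₀ hzw).continuousWithinAt

lemma add' {f g : ℂ → ℂ} {c : ℂ} {R : ℝ} (hf : CircleIntegrable f c R)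
    (hg : CircleIntegrable g c R) :
    (∮ z in C(c, R), (f z + g z)) = (∮ z in C(c, R), f z) + ∮ z in C(c, R), g z := by
  simp only [circleIntegral, smul_add]
  exact intervalIntegral.integral_add hf.out hg.out

lemma zpow_zero' (ρ : ℝ) (hρ0 : 0 < ρ) {k : ℤ} (hk : k ≠ -1) :
    (∮ z in C(0, ρ), z ^ k) = 0 := by
  have := circleIntegral.integral_sub_zpow_of_ne hk 0 0 ρ
  simpa using this

lemma int_inv_center (ρ : ℝ) (hρ0 : 0 < ρ) : (∮ z in C(0, ρ), z⁻¹) = 2 * π * I := by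
  have := circleIntegral.integral_sub_center_inv 0 (R := ρ) hρ0.ne'
  simpa using this

lemma int_inv_one (ρ : ℝ) (hρ0 : 0 < ρ) (hρ1 : ρ < 1) :
    (∮ z in C(0, ρ), (z - 1)⁻¹) = 0 := by
  refine circleIntegral_eq_zero_of_differentiable_on_off_countable hρ0.le
    Set.countable_empty ?_ ?_
  · intro z hz
    have : z - 1 ≠ 0 := by
      intro h
      rw [sub_eq_zero] at h
      rw [Metric.mem_closedBall, dist_eq_norm, sub_zero, h] at hz
      simp at hz
      linarith
    exact (((continuousAt_id.sub continuousAt_const)).inv₀ this).continuousWithinAt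
  · intro z hz
    have : z - 1 ≠ 0 := by
      intro h
      rw [sub_eq_zero] at h
      have := hz.1
      rw [Metric.mem_ball, dist_eq_norm, sub_zero, h] at this
      simp at this
      linarith
    exact ((differentiableAt_id.sub (differentiableAt_const 1)).inv this)

lemma int_inv_w (ρ : ℝ) (hρ0 : 0 < ρ) {w : ℂ} (hw : w ∈ Metric.ball (0:ℂ) ρ) :
    (∮ z in C(0, ρ), (z - w)⁻¹) = 2 * π * I :=
  circleIntegral.integral_sub_inv_of_mem_ball hw

lemma intA (ρ : ℝ) (hρ0 : 0 < ρ) (hρ1 : ρ < 1) :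
    ∀ n : ℕ, (∮ z in C(0, ρ), z ^ (-(n:ℤ)-1) * (z - 1)⁻¹) = -(2 * π * I) := by
  have h1s : (1:ℂ) ∉ Metric.sphere (0:ℂ) ρ := by
    intro h
    have := abs_of_sphere h
    simp at this
    linarith
  intro n
  induction n with
  | zero =>
    simp only [Nat.cast_zero]
    have heq : Set.EqOn (fun z : ℂ => z ^ (-(0:ℤ)-1) * (z - 1)⁻¹)
        (fun z : ℂ => (z - 1)⁻¹ - z⁻¹) (Metric.sphere (0:ℂ) ρ) := by
      intro z hz
      have hz0 : z ≠ 0 := sphere_ne_zero hρ0 hz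
      have hz1 : z - 1 ≠ 0 := sub_ne_zero.2 (ne_of_mem_of_not_mem hz h1s)
      show z ^ (-(0:ℤ)-1) * (z - 1)⁻¹ = (z - 1)⁻¹ - z⁻¹
      rw [show (-(0:ℤ)-1) = -1 by ring, zpow_neg_one]
      field_simp
      ring
    rw [circleIntegral.integral_congr hρ0.le heq,
      circleIntegral.integral_sub (ci_inv ρ hρ0 1 h1s)
        (by simpa using ci_pow ρ hρ0 (-1)),
      int_inv_one ρ hρ0 hρ1, int_inv_center ρ hρ0]
    ring
  | succ n ih =>
    have heq : Set.EqOn (fun z : ℂ => z ^ (-((n:ℤ)+1)-1) * (z - 1)⁻¹)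
        (fun z : ℂ => z ^ (-(n:ℤ)-1) * (z - 1)⁻¹ - z ^ (-(n:ℤ)-2)) (Metric.sphere (0:ℂ) ρ) := by
      intro z hz
      have hz0 : z ≠ 0 := sphere_ne_zero hρ0 hz
      have hz1 : z - 1 ≠ 0 := sub_ne_zero.2 (ne_of_mem_of_not_mem hz h1s)
      show z ^ (-((n:ℤ)+1)-1) * (z - 1)⁻¹ = z ^ (-(n:ℤ)-1) * (z - 1)⁻¹ - z ^ (-(n:ℤ)-2)
      have e1 : (-((n:ℤ)+1)-1) = -(n:ℤ)-2 := by ring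
      have e2 : z ^ (-(n:ℤ)-1) = z ^ (-(n:ℤ)-2) * z := by
        rw [show -(n:ℤ)-1 = (-(n:ℤ)-2)+1 by ring, zpow_add_one₀ hz0]
      rw [e1, e2]
      field_simp
      ring
    have : (∮ z in C(0, ρ), z ^ (-((n:ℤ)+1)-1) * (z - 1)⁻¹)
        = (∮ z in C(0, ρ), z ^ (-(n:ℤ)-1) * (z - 1)⁻¹) - (∮ z in C(0, ρ), z ^ (-(n:ℤ)-2)) := by
      rw [circleIntegral.integral_congr hρ0.le heq]
      exact circleIntegral.integral_sub (ci_mul ρ hρ0 _ 1 h1s) (ci_pow ρ hρ0 _)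
    rw [show (-((n:ℕ)+1:ℕ):ℤ)-1 = -((n:ℤ)+1)-1 by push_cast; ring, this, ih,
      zpow_zero' ρ hρ0 (by omega)]
    ring

lemma intB (ρ : ℝ) (hρ0 : 0 < ρ) (hρ1 : ρ < 1) :
    ∀ n : ℕ, (∮ z in C(0, ρ), z ^ (-(n:ℤ)-1) * (z - ((ρ:ℂ)^2))⁻¹) = 0 := by
  have hw0 : ((ρ:ℂ)^2) ≠ 0 := by
    have : (ρ:ℂ) ≠ 0 := by exact_mod_cast hρ0.ne'
    exact pow_ne_zero 2 this
  have hwabs : ‖(ρ:ℂ)^2‖ = ρ^2 := by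
    rw [show ((ρ:ℂ)^2) = ((ρ^2 : ℝ) : ℂ) by push_cast; ring, Complex.norm_real, Real.norm_eq_abs,
      abs_of_pos (by positivity)]
  have hwb : ((ρ:ℂ)^2) ∈ Metric.ball (0:ℂ) ρ := by
    rw [Metric.mem_ball, dist_eq_norm, sub_zero, hwabs]
    nlinarith
  have hws : ((ρ:ℂ)^2) ∉ Metric.sphere (0:ℂ) ρ := by
    intro h
    have := abs_of_sphere h
    rw [hwabs] at this
    nlinarith
  intro n
  induction n with
  | zero =>
    simp only [Nat.cast_zero]
    have heq : Set.EqOn (fun z : ℂ => z ^ (-(0:ℤ)-1) * (z - ((ρ:ℂ)^2))⁻¹)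
        (fun z : ℂ => ((ρ:ℂ)^2)⁻¹ * ((z - ((ρ:ℂ)^2))⁻¹ - z⁻¹)) (Metric.sphere (0:ℂ) ρ) := by
      intro z hz
      have hz0 : z ≠ 0 := sphere_ne_zero hρ0 hz
      have hzw : z - ((ρ:ℂ)^2) ≠ 0 := sub_ne_zero.2 (ne_of_mem_of_not_mem hz hws)
      show z ^ (-(0:ℤ)-1) * (z - ((ρ:ℂ)^2))⁻¹ = ((ρ:ℂ)^2)⁻¹ * ((z - ((ρ:ℂ)^2))⁻¹ - z⁻¹)
      rw [show (-(0:ℤ)-1) = -1 by ring, zpow_neg_one]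
      have hρc : (ρ:ℂ) ≠ 0 := by exact_mod_cast hρ0.ne'
      field_simp
      ring
    rw [circleIntegral.integral_congr hρ0.le heq,
      circleIntegral.integral_const_mul,
      circleIntegral.integral_sub (ci_inv ρ hρ0 _ hws)
        (by simpa using ci_pow ρ hρ0 (-1)),
      int_inv_w ρ hρ0 hwb, int_inv_center ρ hρ0]
    ring
  | succ n ih =>
    have heq : Set.EqOn (fun z : ℂ => z ^ (-((n:ℤ)+1)-1) * (z - ((ρ:ℂ)^2))⁻¹)
        (fun z : ℂ => ((ρ:ℂ)^2)⁻¹ * (z ^ (-(n:ℤ)-1) * (z - ((ρ:ℂ)^2))⁻¹ - z ^ (-(n:ℤ)-2)))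
        (Metric.sphere (0:ℂ) ρ) := by
      intro z hz
      have hz0 : z ≠ 0 := sphere_ne_zero hρ0 hz
      have hzw : z - ((ρ:ℂ)^2) ≠ 0 := sub_ne_zero.2 (ne_of_mem_of_not_mem hz hws)
      show z ^ (-((n:ℤ)+1)-1) * (z - ((ρ:ℂ)^2))⁻¹
        = ((ρ:ℂ)^2)⁻¹ * (z ^ (-(n:ℤ)-1) * (z - ((ρ:ℂ)^2))⁻¹ - z ^ (-(n:ℤ)-2))
      have e1 : (-((n:ℤ)+1)-1) = -(n:ℤ)-2 := by ring
      have e2 : z ^ (-(n:ℤ)-1) = z ^ (-(n:ℤ)-2) * z := by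
        rw [show -(n:ℤ)-1 = (-(n:ℤ)-2)+1 by ring, zpow_add_one₀ hz0]
      rw [e1, e2]
      have hρc : (ρ:ℂ) ≠ 0 := by exact_mod_cast hρ0.ne'
      field_simp
      ring
    rw [show (-((n:ℕ)+1:ℕ):ℤ)-1 = -((n:ℤ)+1)-1 by push_cast; ring,
      circleIntegral.integral_congr hρ0.le heq,
      circleIntegral.integral_const_mul,
      circleIntegral.integral_sub (ci_mul ρ hρ0 _ _ hws) (ci_pow ρ hρ0 _),
      ih, zpow_zero' ρ hρ0 (by omega)]
    ring

lemma circle_value (m : ℕ) (hm : 1 ≤ m) (ρ : ℝ) (hρ0 : 0 < ρ) (hρ1 : ρ < 1) :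
    (∮ z in C(0, ρ), (ρ:ℂ) * (2*(ρ:ℂ)^2)⁻¹ *
        (z ^ (-(m:ℤ)-1) * (1 + (z - 1)⁻¹ + (ρ:ℂ)^2 * (z - (ρ:ℂ)^2)⁻¹)))
      = -(π:ℂ) * I * ((ρ:ℂ))⁻¹ := by
  have hρ : (ρ:ℂ) ≠ 0 := by exact_mod_cast hρ0.ne'
  have h1s : (1:ℂ) ∉ Metric.sphere (0:ℂ) ρ := by
    intro h
    have := abs_of_sphere h
    simp at this
    linarith
  have hws : ((ρ:ℂ)^2) ∉ Metric.sphere (0:ℂ) ρ := by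
    intro h
    have h2 := abs_of_sphere h
    rw [show ((ρ:ℂ)^2) = ((ρ^2 : ℝ) : ℂ) by push_cast; ring, Complex.norm_real, Real.norm_eq_abs,
      abs_of_pos (by positivity)] at h2
    nlinarith
  have heq : Set.EqOn
      (fun z : ℂ => z ^ (-(m:ℤ)-1) * (1 + (z - 1)⁻¹ + (ρ:ℂ)^2 * (z - (ρ:ℂ)^2)⁻¹))
      (fun z : ℂ => z ^ (-(m:ℤ)-1) + ((z ^ (-(m:ℤ)-1) * (z - 1)⁻¹)
        + (ρ:ℂ)^2 * (z ^ (-(m:ℤ)-1) * (z - (ρ:ℂ)^2)⁻¹))) (Metric.sphere (0:ℂ) ρ) := by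
    intro z hz
    show z ^ (-(m:ℤ)-1) * (1 + (z - 1)⁻¹ + (ρ:ℂ)^2 * (z - (ρ:ℂ)^2)⁻¹)
      = z ^ (-(m:ℤ)-1) + ((z ^ (-(m:ℤ)-1) * (z - 1)⁻¹)
        + (ρ:ℂ)^2 * (z ^ (-(m:ℤ)-1) * (z - (ρ:ℂ)^2)⁻¹))
    ring
  have h1 : CircleIntegrable (fun z : ℂ => z ^ (-(m:ℤ)-1)) 0 ρ := ci_pow ρ hρ0 _
  have h2 : CircleIntegrable (fun z : ℂ => z ^ (-(m:ℤ)-1) * (z - 1)⁻¹) 0 ρ :=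
    ci_mul ρ hρ0 _ _ h1s
  have h3 : CircleIntegrable
      (fun z : ℂ => (ρ:ℂ)^2 * (z ^ (-(m:ℤ)-1) * (z - (ρ:ℂ)^2)⁻¹)) 0 ρ := by
    have h := ci_mul ρ hρ0 (-(m:ℤ)-1) _ hws
    exact IntervalIntegrable.const_mul h _
  have h23 : CircleIntegrable (fun z : ℂ => z ^ (-(m:ℤ)-1) * (z - 1)⁻¹
      + (ρ:ℂ)^2 * (z ^ (-(m:ℤ)-1) * (z - (ρ:ℂ)^2)⁻¹)) 0 ρ := h2.add h3
  have E1 : (∮ z in C(0, ρ), (z ^ (-(m:ℤ)-1) + ((z ^ (-(m:ℤ)-1) * (z - 1)⁻¹)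
        + (ρ:ℂ)^2 * (z ^ (-(m:ℤ)-1) * (z - (ρ:ℂ)^2)⁻¹))))
      = (∮ z in C(0, ρ), z ^ (-(m:ℤ)-1))
        + (∮ z in C(0, ρ), ((z ^ (-(m:ℤ)-1) * (z - 1)⁻¹)
          + (ρ:ℂ)^2 * (z ^ (-(m:ℤ)-1) * (z - (ρ:ℂ)^2)⁻¹))) := add' h1 h23
  have E2 : (∮ z in C(0, ρ), ((z ^ (-(m:ℤ)-1) * (z - 1)⁻¹)
        + (ρ:ℂ)^2 * (z ^ (-(m:ℤ)-1) * (z - (ρ:ℂ)^2)⁻¹)))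
      = (∮ z in C(0, ρ), z ^ (-(m:ℤ)-1) * (z - 1)⁻¹)
        + (∮ z in C(0, ρ), (ρ:ℂ)^2 * (z ^ (-(m:ℤ)-1) * (z - (ρ:ℂ)^2)⁻¹)) := add' h2 h3
  have E3 : (∮ z in C(0, ρ), (ρ:ℂ)^2 * (z ^ (-(m:ℤ)-1) * (z - (ρ:ℂ)^2)⁻¹))
      = (ρ:ℂ)^2 * ∮ z in C(0, ρ), z ^ (-(m:ℤ)-1) * (z - (ρ:ℂ)^2)⁻¹ :=
    circleIntegral.integral_const_mul _ _ _ _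
  rw [circleIntegral.integral_const_mul, circleIntegral.integral_congr hρ0.le heq,
    E1, E2, E3, zpow_zero' ρ hρ0 (by omega), intA ρ hρ0 hρ1 m, intB ρ hρ0 hρ1 m]
  field_simp
  ring

lemma mu_eq (ρ : ℝ) (hρ0 : 0 < ρ) (hρ1 : ρ < 1) (z : ℂ) (hz : ‖z‖ = ρ) :
    (mu z : ℂ) = I * (2 * (ρ:ℂ)^2)⁻¹ *
      (1 + (z - 1)⁻¹ + (ρ:ℂ)^2 * (z - (ρ:ℂ)^2)⁻¹) := by
  have hρ : (ρ:ℂ) ≠ 0 := by exact_mod_cast hρ0.ne'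
  have hz0 : z ≠ 0 := by
    intro h; rw [h] at hz; simp at hz; exact hρ0.ne hz
  have hz1 : z - 1 ≠ 0 := by
    intro h; rw [sub_eq_zero] at h; rw [h] at hz; simp at hz; linarith
  have hzw : z - (ρ:ℂ)^2 ≠ 0 := by
    intro h; rw [sub_eq_zero] at h
    have h2 : ‖z‖ = ρ^2 := by
      rw [h]
      rw [show ((ρ:ℂ)^2) = ((ρ^2 : ℝ) : ℂ) by push_cast; ring]
      rw [Complex.norm_real, Real.norm_eq_abs, abs_of_pos (by positivity)]
    nlinarith [h2.symm.trans hz]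
  have hc : (starRingEnd ℂ) z = (ρ:ℂ)^2 / z := by
    have h1 : z * (starRingEnd ℂ) z = (ρ:ℂ)^2 := by
      rw [Complex.mul_conj]
      norm_cast
      rw [← Complex.sq_norm, hz]
    field_simp
    linear_combination h1
  have him : (z.im : ℂ) = (z - (starRingEnd ℂ) z) * (-I) / 2 := by
    rw [Complex.sub_conj]
    push_cast
    linear_combination (z.im : ℂ) * Complex.I_mul_I
  have habs2 : ((‖z‖ : ℝ) : ℂ)^2 = (ρ:ℂ)^2 := by rw [hz]
  have habs1 : ((‖z-1‖ : ℝ) : ℂ)^2 = (z-1) * ((starRingEnd ℂ) z - 1) := by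
    have h := Complex.mul_conj (z-1)
    rw [map_sub, map_one] at h
    rw [h]
    norm_cast
    exact Complex.sq_norm _
  have key : (mu z : ℂ) = I * (z^2 - (ρ:ℂ)^2) / (2 * (ρ:ℂ)^2 * (z-1) * (z - (ρ:ℂ)^2)) := by
    have hc1 : (ρ:ℂ)^2 / z - 1 ≠ 0 := by
      rw [sub_ne_zero]
      intro h
      rw [div_eq_one_iff_eq hz0] at h
      exact hzw (by rw [← h]; ring)
    rw [mu]
    push_cast
    rw [him, habs2, habs1, hc]
    rw [div_eq_div_iff (mul_ne_zero (pow_ne_zero 2 hρ) (mul_ne_zero hz1 hc1))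
      (mul_ne_zero (mul_ne_zero (mul_ne_zero two_ne_zero (pow_ne_zero 2 hρ)) hz1) hzw)]
    field_simp
    ring
  have hbr : 1 + (z-1)⁻¹ + (ρ:ℂ)^2 * (z - (ρ:ℂ)^2)⁻¹
      = (z^2 - (ρ:ℂ)^2) / ((z-1) * (z - (ρ:ℂ)^2)) := by
    rw [eq_div_iff (mul_ne_zero hz1 hzw)]
    field_simp
    ring
  rw [key, hbr]
  simp only [div_eq_mul_inv, mul_inv]
  ring

lemma integrand_eq (m : ℕ) (ρ : ℝ) (hρ0 : 0 < ρ) (hρ1 : ρ < 1) (θ : ℝ) :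
    ρ • ((circleMap 0 ρ θ) ^ (-(m:ℤ)) * (mu (circleMap 0 ρ θ) : ℂ))
      = deriv (circleMap 0 ρ) θ • ((ρ:ℂ) * (2*(ρ:ℂ)^2)⁻¹ *
        ((circleMap 0 ρ θ) ^ (-(m:ℤ)-1) *
          (1 + (circleMap 0 ρ θ - 1)⁻¹ + (ρ:ℂ)^2 * (circleMap 0 ρ θ - (ρ:ℂ)^2)⁻¹))) := by
  set z := circleMap 0 ρ θ with hzdef
  have habs : ‖z‖ = ρ := by
    rw [hzdef, norm_circleMap_zero, abs_of_pos hρ0]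
  have hz0 : z ≠ 0 := by
    intro h
    rw [h] at habs
    simp at habs
    exact hρ0.ne' habs.symm
  have hzp : z ^ (-(m:ℤ)-1) = z ^ (-(m:ℤ)) * z⁻¹ := by
    rw [show -(m:ℤ)-1 = -(m:ℤ) + (-1) by ring, zpow_add₀ hz0, zpow_neg_one]
  have hzz : z * z⁻¹ = 1 := mul_inv_cancel₀ hz0
  rw [mu_eq ρ hρ0 hρ1 z habs, deriv_circleMap, smul_eq_mul, Complex.real_smul, ← hzdef, hzp]
  linear_combination (-(ρ:ℂ) * z ^ (-(m:ℤ)) * I * (2*(ρ:ℂ)^2)⁻¹ *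
    (1 + (z - 1)⁻¹ + (ρ:ℂ)^2 * (z - (ρ:ℂ)^2)⁻¹)) * hzz

lemma inner_val (m : ℕ) (hm : 1 ≤ m) (ρ : ℝ) (hρ0 : 0 < ρ) (hρ1 : ρ < 1) :
    ∫ θ in Set.Ioo (-π) π,
        (ρ • ((Complex.polarCoord.symm (ρ, θ)) ^ (-(m:ℤ))
          * (mu (Complex.polarCoord.symm (ρ, θ)) : ℂ)))
      = -(π:ℂ) * I * ((ρ:ℂ))⁻¹ := by
  have hsymm : ∀ θ : ℝ, Complex.polarCoord.symm (ρ, θ) = circleMap 0 ρ θ := by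
    intro θ
    rw [Complex.polarCoord_symm_apply, circleMap, Complex.exp_mul_I]
    push_cast
    ring
  simp_rw [hsymm]
  rw [← MeasureTheory.integral_Ioc_eq_integral_Ioo,
    ← intervalIntegral.integral_of_le (by linarith [Real.pi_pos] : -π ≤ π)]
  have hper : Function.Periodic
      (fun θ : ℝ => ρ • ((circleMap 0 ρ θ) ^ (-(m:ℤ)) * (mu (circleMap 0 ρ θ) : ℂ))) (2*π) := by
    intro θ
    simp only [periodic_circleMap 0 ρ θ]
  have hshift := hper.intervalIntegral_add_eq (-π) 0
  rw [show -π + 2*π = π by ring] at hshift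
  rw [hshift, zero_add]
  have : (∫ θ in (0:ℝ)..2*π,
      ρ • ((circleMap 0 ρ θ) ^ (-(m:ℤ)) * (mu (circleMap 0 ρ θ) : ℂ)))
      = ∮ z in C(0, ρ), (ρ:ℂ) * (2*(ρ:ℂ)^2)⁻¹ *
        (z ^ (-(m:ℤ)-1) * (1 + (z - 1)⁻¹ + (ρ:ℂ)^2 * (z - (ρ:ℂ)^2)⁻¹)) := by
    rw [circleIntegral]
    exact intervalIntegral.integral_congr fun θ _ => integrand_eq m ρ hρ0 hρ1 θ
  rw [this, circle_value m hm ρ hρ0 hρ1]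



lemma bound_aux {s t c D : ℝ} (hs : 0 < s) (ht : 0 < t) (hc : 0 < c)
    (hD : s^2 + c*t^2 ≤ D) :
    t / D ≤ c^(-(3/4):ℝ) * (s^(-(1/2):ℝ) * t^(-(1/2):ℝ)) := by
  have hA : (0:ℝ) < s^((1/2):ℝ) * c^((3/4):ℝ) * t^((3/2):ℝ) := by positivity
  have hAeq : s^((1/2):ℝ) * c^((3/4):ℝ) * t^((3/2):ℝ)
      = (s^2)^((1/4):ℝ) * (c*t^2)^((3/4):ℝ) := by
    rw [Real.mul_rpow hc.le (by positivity), ← Real.rpow_natCast s 2, ← Real.rpow_natCast t 2,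
      ← Real.rpow_mul hs.le, ← Real.rpow_mul ht.le]
    norm_num
    ring
  have hmean := Real.geom_mean_le_arith_mean2_weighted (by norm_num : (0:ℝ) ≤ 1/4)
    (by norm_num : (0:ℝ) ≤ 3/4) (by positivity : (0:ℝ) ≤ s^2)
    (by positivity : (0:ℝ) ≤ c*t^2) (by norm_num)
  have hAle : s^((1/2):ℝ) * c^((3/4):ℝ) * t^((3/2):ℝ) ≤ D := by
    rw [hAeq]
    nlinarith [sq_nonneg s, mul_pos hc (mul_pos ht ht)]
  have hD0 : 0 < D := lt_of_lt_of_le hA hAle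
  have step1 : t / D ≤ t / (s^((1/2):ℝ) * c^((3/4):ℝ) * t^((3/2):ℝ)) :=
    (div_le_div_iff_of_pos_left ht hD0 hA).2 hAle
  refine step1.trans (le_of_eq ?_)
  rw [Real.rpow_neg hc.le, Real.rpow_neg hs.le,
    show (-(1/2):ℝ) = 1 - 3/2 by norm_num, Real.rpow_sub ht, Real.rpow_one,
    div_eq_mul_inv, div_eq_mul_inv, mul_inv, mul_inv]
  ring
lemma norm_F_eq (m : ℕ) {r ρ θ : ℝ} (hr0 : 0 < r) (hρ : ρ ∈ Set.Ioo r 1) :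
    ‖ρ • ((Complex.polarCoord.symm (ρ, θ)) ^ (-(m:ℤ))
        * (mu (Complex.polarCoord.symm (ρ, θ)) : ℂ))‖
      = (ρ^m)⁻¹ * |Real.sin θ| / ‖Complex.polarCoord.symm (ρ, θ) - 1‖^2 := by
  have hρ0 : 0 < ρ := hr0.trans hρ.1
  set z := Complex.polarCoord.symm (ρ, θ) with hzdef
  have habs : ‖z‖ = ρ := by
    rw [hzdef, Complex.norm_polarCoord_symm, abs_of_pos hρ0]
  have hz1 : z ≠ 1 := by
    intro h
    rw [h] at habs
    simp at habs
    have := hρ.2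
    linarith
  have hD : 0 < ‖z - 1‖^2 := by
    have h' : z - 1 ≠ 0 := sub_ne_zero.2 hz1
    exact pow_pos (norm_pos_iff.mpr h') 2
  have him : z.im = ρ * Real.sin θ := by
    rw [hzdef, Complex.polarCoord_symm_apply]
    simp [Complex.sin_ofReal_re]
  rw [norm_smul, norm_mul, norm_zpow, habs,
    Complex.norm_real, Real.norm_eq_abs, Real.norm_eq_abs, abs_of_pos hρ0, mu, him, habs]
  rw [zpow_neg, zpow_natCast]
  rw [abs_div, abs_mul, abs_of_pos hρ0, abs_of_pos (mul_pos (pow_pos hρ0 2) hD)]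
  field_simp

lemma pointwise_bound (m : ℕ) {r : ℝ} (hr0 : 0 < r) (hr1 : r < 1)
    {p : ℝ × ℝ} (hp : p ∈ Set.Ioo r 1 ×ˢ Set.Ioo (-π) π) :
    ‖p.1 • ((Complex.polarCoord.symm p) ^ (-(m:ℤ))
        * (mu (Complex.polarCoord.symm p) : ℂ))‖
      ≤ ((r^m)⁻¹ * (4*r/π^2)^(-(3/4):ℝ)) *
        ((1 - p.1)^(-(1/2):ℝ) * |p.2|^(-(1/2):ℝ)) := by
  obtain ⟨hρ, hθ⟩ := hp
  set ρ := p.1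
  set θ := p.2
  have hρ0 : 0 < ρ := hr0.trans hρ.1
  have hc : (0:ℝ) < 4*r/π^2 := by
    have := Real.pi_pos
    positivity
  have heq : (Complex.polarCoord.symm (ρ, θ)) = Complex.polarCoord.symm p := by
    rfl
  rw [← heq, norm_F_eq m hr0 hρ]
  set z := Complex.polarCoord.symm (ρ, θ) with hzdef
  have habs : ‖z‖ = ρ := by
    rw [hzdef, Complex.norm_polarCoord_symm, abs_of_pos hρ0]
  have hDlow : (1-ρ)^2 + (4*r/π^2)*θ^2 ≤ ‖z - 1‖^2 := by
    have hsq : ‖z-1‖^2 = (ρ * Real.cos θ - 1)^2 + (ρ * Real.sin θ)^2 := by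
      rw [Complex.sq_norm, Complex.normSq_apply, hzdef, Complex.polarCoord_symm_apply]
      simp [Complex.cos_ofReal_re, Complex.sin_ofReal_re]
      ring
    have hpyth := Real.sin_sq_add_cos_sq θ
    have hcos : Real.cos θ ≤ 1 - 2/π^2 * θ^2 :=
      Real.cos_le_one_sub_mul_cos_sq (by
        rw [abs_le]; constructor <;> [linarith [hθ.1]; linarith [hθ.2]])
    have hexp : (ρ * Real.cos θ - 1)^2 + (ρ * Real.sin θ)^2
        = (1-ρ)^2 + 2*ρ*(1 - Real.cos θ) := by nlinarith [hpyth]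
    rw [hsq, hexp]
    have h1c : 2/π^2 * θ^2 ≤ 1 - Real.cos θ := by linarith
    have : (4*r/π^2)*θ^2 ≤ 2*ρ*(1 - Real.cos θ) := by
      have hπ := Real.pi_pos
      have h2 : 2*r*(2/π^2*θ^2) ≤ 2*ρ*(1 - Real.cos θ) := by
        apply mul_le_mul (by linarith [hρ.1]) h1c (by positivity) (by linarith [hρ.1, hr0])
      calc (4*r/π^2)*θ^2 = 2*r*(2/π^2*θ^2) := by ring
        _ ≤ _ := h2
    linarith
  rcases eq_or_ne θ 0 with h0 | h0
  · rw [h0]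
    simp only [Real.sin_zero, abs_zero, mul_zero, zero_div,
      Real.zero_rpow (show ((-(1/2)):ℝ) ≠ 0 by norm_num)]
    exact le_refl 0
  · have ht0 : 0 < |θ| := abs_pos.2 h0
    have hs0 : 0 < 1 - ρ := by linarith [hρ.2]
    have hD' : (1-ρ)^2 + (4*r/π^2)*|θ|^2 ≤ ‖z - 1‖^2 := by
      rwa [_root_.sq_abs]
    have hba := bound_aux hs0 ht0 hc hD'
    have hsin : |Real.sin θ| ≤ |θ| := Real.abs_sin_le_abs
    have hDpos : 0 < ‖z-1‖^2 :=
      lt_of_lt_of_le (by positivity) hD'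
    have hmono : (ρ^m)⁻¹ ≤ (r^m)⁻¹ := by
      apply inv_anti₀ (by positivity)
      exact pow_le_pow_left₀ hr0.le hρ.1.le m
    calc (ρ^m)⁻¹ * |Real.sin θ| / ‖z-1‖^2
        ≤ (r^m)⁻¹ * |θ| / ‖z-1‖^2 := by
          exact (div_le_div_iff_of_pos_right hDpos).2
            (mul_le_mul hmono hsin (abs_nonneg _) (by positivity))
      _ = (r^m)⁻¹ * (|θ| / ‖z-1‖^2) := by ring
      _ ≤ (r^m)⁻¹ * ((4*r/π^2)^(-(3/4):ℝ) * ((1-ρ)^(-(1/2):ℝ) * |θ|^(-(1/2):ℝ))) := by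
          apply mul_le_mul_of_nonneg_left hba (by positivity)
      _ = ((r^m)⁻¹ * (4*r/π^2)^(-(3/4):ℝ)) * ((1-ρ)^(-(1/2):ℝ) * |θ|^(-(1/2):ℝ)) := by ring

lemma integrable_rpow_one_sub (r : ℝ) (hr0 : 0 < r) (hr1 : r < 1) :
    IntegrableOn (fun x : ℝ => (1 - x)^(-(1/2):ℝ)) (Set.Ioo r 1) := by
  have h1 : IntervalIntegrable (fun x : ℝ => x ^ (-(1/2):ℝ)) volume 0 (1-r) :=
    intervalIntegral.intervalIntegrable_rpow' (by norm_num)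
  have h2 := h1.comp_sub_left 1
  simp only [sub_zero, sub_sub_cancel] at h2
  have h3 : IntegrableOn (fun x : ℝ => (1 - x)^(-(1/2):ℝ)) (Set.Ioc r 1) := h2.symm.1
  exact h3.mono_set Set.Ioo_subset_Ioc_self

lemma integrable_rpow_abs (a : ℝ) (ha : 0 < a) :
    IntegrableOn (fun x : ℝ => |x|^(-(1/2):ℝ)) (Set.Ioo (-a) a) := by
  have h1 : IntervalIntegrable (fun x : ℝ => x ^ (-(1/2):ℝ)) volume 0 a :=
    intervalIntegral.intervalIntegrable_rpow' (by norm_num)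
  have hpos : IntegrableOn (fun x : ℝ => |x|^(-(1/2):ℝ)) (Set.Ioc 0 a) := by
    refine (h1.1).congr_fun ?_ measurableSet_Ioc
    intro x hx
    simp [abs_of_pos hx.1]
  have hneg : IntegrableOn (fun x : ℝ => |x|^(-(1/2):ℝ)) (Set.Ioc (-a) 0) := by
    have h2 := (IntervalIntegrable.iff_comp_neg
      (f := fun x : ℝ => x ^ (-(1/2):ℝ)) (a := 0) (b := a)).mp h1
    simp only [neg_zero] at h2
    refine (h2.symm.1).congr_fun ?_ measurableSet_Ioc
    intro x hx
    simp [abs_of_nonpos hx.2]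
  have := hneg.union hpos
  refine this.mono_set ?_
  intro x hx
  rcases le_or_gt x 0 with h | h
  · exact Or.inl ⟨hx.1, h⟩
  · exact Or.inr ⟨h, hx.2.le⟩

lemma integrable_polar (m : ℕ) (r : ℝ) (hr0 : 0 < r) (hr1 : r < 1) :
    IntegrableOn (fun p : ℝ × ℝ => p.1 • ((Complex.polarCoord.symm p) ^ (-(m:ℤ))
        * (mu (Complex.polarCoord.symm p) : ℂ)))
      (Set.Ioo r 1 ×ˢ Set.Ioo (-π) π) := by
  have hπ := Real.pi_pos
  set S : Set (ℝ × ℝ) := Set.Ioo r 1 ×ˢ Set.Ioo (-π) π with hS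
  have hSmeas : MeasurableSet S := (measurableSet_Ioo.prod measurableSet_Ioo)
  -- continuity
  have hcont : ContinuousOn (fun p : ℝ × ℝ => p.1 • ((Complex.polarCoord.symm p) ^ (-(m:ℤ))
      * (mu (Complex.polarCoord.symm p) : ℂ))) S := by
    intro p hp
    obtain ⟨hρ, hθ⟩ := hp
    have hρ0 : 0 < p.1 := hr0.trans hρ.1
    have habs : ‖Complex.polarCoord.symm p‖ = p.1 := by
      rw [Complex.norm_polarCoord_symm, abs_of_pos hρ0]
    have hz0 : Complex.polarCoord.symm p ≠ 0 := by
      intro h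
      rw [h] at habs
      simp at habs
      exact hρ0.ne habs
    have hz1 : Complex.polarCoord.symm p - 1 ≠ 0 := by
      rw [sub_ne_zero]
      intro h
      rw [h] at habs
      simp at habs
      linarith [hρ.2]
    have hsymm_cont : Continuous (fun p : ℝ × ℝ => (Complex.polarCoord.symm p : ℂ)) := by
      have : (fun p : ℝ × ℝ => (Complex.polarCoord.symm p : ℂ))
          = fun p : ℝ × ℝ => (p.1 : ℂ) * (Real.cos p.2 + Real.sin p.2 * Complex.I) := by
        funext q
        rw [Complex.polarCoord_symm_apply]
      rw [this]
      fun_prop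
    have hmu_cont : ContinuousAt mu (Complex.polarCoord.symm p) := by
      apply ContinuousAt.div
      · exact Complex.continuous_im.continuousAt
      · exact ((continuous_norm.pow 2).mul
          ((continuous_norm.comp (continuous_id.sub continuous_const)).pow 2)).continuousAt
      · have h1 : ‖Complex.polarCoord.symm p‖ ≠ 0 := by
          rw [habs]; exact hρ0.ne'
        have h2 : ‖Complex.polarCoord.symm p - 1‖ ≠ 0 :=
          norm_ne_zero_iff.mpr hz1
        positivity
    apply ContinuousWithinAt.smul (f := fun p : ℝ × ℝ => p.1) (g := fun p : ℝ × ℝ =>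
      (Complex.polarCoord.symm p) ^ (-(m:ℤ)) * (mu (Complex.polarCoord.symm p) : ℂ))
    · exact continuous_fst.continuousWithinAt
    · apply ContinuousWithinAt.mul
      · exact ((continuousAt_zpow₀ _ _ (Or.inl hz0)).comp
          hsymm_cont.continuousAt).continuousWithinAt
      · exact (Complex.continuous_ofReal.continuousAt.comp
          (hmu_cont.comp hsymm_cont.continuousAt)).continuousWithinAt
  -- dominating function
  set C : ℝ := (r^m)⁻¹ * (4*r/π^2)^(-(3/4):ℝ) with hC
  have hG : IntegrableOn (fun p : ℝ × ℝ =>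
      C * ((1 - p.1)^(-(1/2):ℝ) * |p.2|^(-(1/2):ℝ))) S := by
    have h1 := integrable_rpow_one_sub r hr0 hr1
    have h2 := integrable_rpow_abs π hπ
    have hprod : Integrable (fun p : ℝ × ℝ =>
        (1 - p.1)^(-(1/2):ℝ) * |p.2|^(-(1/2):ℝ))
        ((volume.restrict (Set.Ioo r 1)).prod (volume.restrict (Set.Ioo (-π) π))) :=
      h1.mul_prod h2
    rw [Measure.prod_restrict, ← Measure.volume_eq_prod] at hprod
    exact hprod.const_mul C
  refine Integrable.mono' hG (hcont.aestronglyMeasurable hSmeas) ?_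
  filter_upwards [ae_restrict_mem hSmeas] with p hp
  exact pointwise_bound m hr0 hr1 hp

end helper

open Real helper in
theorem stmt_10 (m : ℕ) (hm : 1 ≤ m) (r : ℝ) (hr0 : 0 < r) (hr1 : r < 1) :
    ∫ z in {z : ℂ | r < ‖z‖ ∧ ‖z‖ < 1},
        z ^ (-(m : ℤ)) * (mu z : ℂ) =
      Complex.I * (Real.pi : ℂ) * (Real.log r : ℂ) := by
  have hπ := Real.pi_pos
  set S : Set ℂ := {z : ℂ | r < ‖z‖ ∧ ‖z‖ < 1} with hSdef
  set g : ℂ → ℂ := fun z => z ^ (-(m:ℤ)) * (mu z : ℂ) with hg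
  have hSmeas : MeasurableSet S := by
    have : IsOpen S := (isOpen_lt continuous_const continuous_norm).inter
      (isOpen_lt continuous_norm continuous_const)
    exact this.measurableSet
  have step1 : (∫ z in S, g z) = ∫ z, S.indicator g z := (integral_indicator hSmeas).symm
  have step2 : (∫ z, S.indicator g z)
      = ∫ p in polarCoord.target, p.1 • (S.indicator g) (Complex.polarCoord.symm p) :=
    (Complex.integral_comp_polarCoord_symm (S.indicator g)).symm
  set T : Set (ℝ × ℝ) := Set.Ioo r 1 ×ˢ Set.Ioo (-π) π with hT
  have hTmeas : MeasurableSet T := measurableSet_Ioo.prod measurableSet_Ioo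
  have step3 : (∫ p in polarCoord.target, p.1 • (S.indicator g) (Complex.polarCoord.symm p))
      = ∫ p in polarCoord.target,
          T.indicator (fun p : ℝ × ℝ => p.1 • g (Complex.polarCoord.symm p)) p := by
    apply setIntegral_congr_fun polarCoord.open_target.measurableSet
    intro p hp
    have hp1 : 0 < p.1 := hp.1
    have habs : ‖Complex.polarCoord.symm p‖ = p.1 := by
      rw [Complex.norm_polarCoord_symm, abs_of_pos hp1]
    show p.1 • S.indicator g (Complex.polarCoord.symm p)
      = T.indicator (fun p : ℝ × ℝ => p.1 • g (Complex.polarCoord.symm p)) p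
    by_cases h : p ∈ T
    · have hmem : Complex.polarCoord.symm p ∈ S := by
        rw [hSdef]
        exact ⟨by rw [habs]; exact h.1.1, by rw [habs]; exact h.1.2⟩
      rw [Set.indicator_of_mem hmem, Set.indicator_of_mem h]
    · have hmem : Complex.polarCoord.symm p ∉ S := by
        rw [hSdef]
        intro hc
        apply h
        refine ⟨⟨?_, ?_⟩, hp.2⟩
        · rw [← habs]; exact hc.1
        · rw [← habs]; exact hc.2
      rw [Set.indicator_of_notMem hmem, Set.indicator_of_notMem h, smul_zero]
  have hTsub : T ⊆ polarCoord.target := by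
    intro p hp
    exact ⟨lt_trans hr0 hp.1.1, hp.2⟩
  have step4 : (∫ p in polarCoord.target,
        T.indicator (fun p : ℝ × ℝ => p.1 • g (Complex.polarCoord.symm p)) p)
      = ∫ p in T, p.1 • g (Complex.polarCoord.symm p) := by
    rw [setIntegral_indicator hTmeas, Set.inter_eq_self_of_subset_right hTsub]
  have step5 : (∫ p in T, p.1 • g (Complex.polarCoord.symm p))
      = ∫ x in Set.Ioo r 1, ∫ y in Set.Ioo (-π) π,
          x • g (Complex.polarCoord.symm (x, y)) := by
    rw [hT, Measure.volume_eq_prod]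
    exact setIntegral_prod _ (by
      rw [← Measure.volume_eq_prod]
      exact integrable_polar m r hr0 hr1)
  have step6 : (∫ x in Set.Ioo r 1, ∫ y in Set.Ioo (-π) π,
        x • g (Complex.polarCoord.symm (x, y)))
      = ∫ x in Set.Ioo r 1, -(π:ℂ) * I * ((x:ℂ))⁻¹ := by
    apply setIntegral_congr_fun measurableSet_Ioo
    intro ρ hρ
    exact inner_val m hm ρ (hr0.trans hρ.1) hρ.2
  have step7 : (∫ x in Set.Ioo r 1, -(π:ℂ) * I * ((x:ℂ))⁻¹)
      = -(π:ℂ) * I * ((- Real.log r : ℝ) : ℂ) := by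
    have e1 : (∫ x in Set.Ioo r 1, -(π:ℂ) * I * ((x:ℂ))⁻¹)
        = -(π:ℂ) * I * ∫ x in Set.Ioo r 1, ((x:ℂ))⁻¹ := by
      rw [integral_const_mul]
    rw [e1]
    congr 1
    have e2 : (∫ x in Set.Ioo r 1, ((x:ℂ))⁻¹)
        = ((∫ x in Set.Ioo r 1, x⁻¹ : ℝ) : ℂ) := by
      simp_rw [← Complex.ofReal_inv]
      exact integral_ofReal
    rw [e2]
    congr 1
    rw [← integral_Ioc_eq_integral_Ioo, ← intervalIntegral.integral_of_le hr1.le,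
      integral_inv_of_pos hr0 one_pos, one_div, Real.log_inv]
  rw [step1, step2, step3, step4, step5, step6, step7]
  push_cast
  ring
end

section
/- For every complex number z with |z| < 1, the integral over {w ∈ ℂ : |w| > 1} of (w − z)⁻¹ · μ(w) with respect to Lebesgue measure equals the negative of the integral over {w ∈ ℂ : |w| < 1} of w·(1 − z·w)⁻¹ · μ(w). (Change of variables w ↦ 1/w.) -/
open MeasureTheory Complex

lemma det_mul_complex (c : ℂ) :
    (((1 : ℂ →L[ℂ] ℂ).smulRight c).restrictScalars ℝ).det = Complex.normSq c := by
  have h : ((((1 : ℂ →L[ℂ] ℂ).smulRight c).restrictScalars ℝ : ℂ →L[ℝ] ℂ) : ℂ →ₗ[ℝ] ℂ)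
      = Algebra.lmul ℝ ℂ c := by
    ext x
    simp [mul_comm]
  rw [ContinuousLinearMap.det, h, ← Algebra.norm_apply, Algebra.norm_complex_apply]

theorem stmt_14 (z : ℂ) (hz : ‖z‖ < 1) :
    ∫ w in {w : ℂ | 1 < ‖w‖}, (w - z)⁻¹ * (mu w : ℂ) =
      -∫ w in {w : ℂ | ‖w‖ < 1}, w * (1 - z * w)⁻¹ * (mu w : ℂ) := by
  set s : Set ℂ := Metric.ball (0 : ℂ) 1 \ {0} with hs_def
  have hs : MeasurableSet s := measurableSet_ball.diff (measurableSet_singleton 0)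
  have hmem : ∀ u : ℂ, u ∈ s ↔ ‖u‖ < 1 ∧ u ≠ 0 := by
    intro u
    simp [hs_def, mem_ball_zero_iff]
  -- the derivative of inversion
  set f' : ℂ → ℂ →L[ℝ] ℂ :=
    fun u => ((1 : ℂ →L[ℂ] ℂ).smulRight (-(u ^ 2)⁻¹)).restrictScalars ℝ with hf'_def
  have hf' : ∀ u ∈ s, HasFDerivWithinAt (fun u : ℂ => u⁻¹) (f' u) s u := by
    intro u hu
    have hu0 : u ≠ 0 := ((hmem u).1 hu).2
    exact ((hasDerivAt_inv hu0).hasFDerivAt.restrictScalars ℝ).hasFDerivWithinAt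
  have hinj : Set.InjOn (fun u : ℂ => u⁻¹) s := fun a _ b _ h => inv_injective h
  -- image of s under inversion
  have himg : (fun u : ℂ => u⁻¹) '' s = {w : ℂ | 1 < ‖w‖} := by
    ext w
    constructor
    · rintro ⟨u, hu, rfl⟩
      obtain ⟨hu1, hu0⟩ := (hmem u).1 hu
      have h0 : 0 < ‖u‖ := norm_pos_iff.mpr hu0
      simp only [Set.mem_setOf_eq, norm_inv]
      rw [lt_inv_comm₀ one_pos h0]
      simpa using hu1
    · intro hw
      have hw0 : w ≠ 0 := by
        intro h; rw [h] at hw; norm_num at hw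
      refine ⟨w⁻¹, ?_, by simp⟩
      rw [hmem]
      constructor
      · rw [norm_inv, inv_lt_one_iff₀]
        right; exact hw
      · simpa using hw0
  have key := integral_image_eq_integral_abs_det_fderiv_smul volume hs hf' hinj
    (fun w : ℂ => (w - z)⁻¹ * (mu w : ℂ))
  rw [himg] at key
  rw [key]
  -- now compute the integrand on s
  have hpt : ∀ u ∈ s,
      |(f' u).det| • ((u⁻¹ - z)⁻¹ * (mu u⁻¹ : ℂ)) = -(u * (1 - z * u)⁻¹ * (mu u : ℂ)) := by
    intro u hu
    obtain ⟨hu1, hu0⟩ := (hmem u).1 hu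
    have ha : ‖u‖ ≠ 0 := by
      simpa using hu0
    have hune : u ≠ 1 := by
      intro h; rw [h] at hu1; simp at hu1
    have hb : ‖u - 1‖ ≠ 0 := by
      simp [sub_eq_zero, hune]
    have hzu : (1 : ℂ) - z * u ≠ 0 := by
      intro h
      have : ‖z * u‖ = 1 := by
        have : z * u = 1 := by linear_combination -h
        rw [this]; simp
      rw [norm_mul] at this
      nlinarith [norm_nonneg z, norm_nonneg u, hz, hu1]
    -- determinant value
    have hdet : |(f' u).det| = ((‖u‖) ^ 2 * (‖u‖) ^ 2)⁻¹ := by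
      rw [hf'_def]
      simp only []
      rw [det_mul_complex]
      rw [_root_.abs_of_nonneg (Complex.normSq_nonneg _)]
      rw [Complex.normSq_neg, map_inv₀, map_pow, Complex.normSq_eq_norm_sq]
      ring
    -- the complex factor
    have hfac : (u⁻¹ - z)⁻¹ = u * (1 - z * u)⁻¹ := by
      have : u⁻¹ - z = (1 - z * u) * u⁻¹ := by
        field_simp
      rw [this, mul_inv, inv_inv, mul_comm]
    -- mu at the inverse
    have hmu : mu u⁻¹ = -u.im * (‖u‖) ^ 2 / (‖u - 1‖) ^ 2 := by
      unfold mu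
      have h1 : (u⁻¹ : ℂ).im = -u.im / (‖u‖) ^ 2 := by
        rw [Complex.inv_im, Complex.normSq_eq_norm_sq]
      have h2 : ‖u⁻¹‖ = (‖u‖)⁻¹ := norm_inv u
      have h3 : ‖u⁻¹ - 1‖ = ‖u - 1‖ / ‖u‖ := by
        have : u⁻¹ - 1 = -(u - 1) * u⁻¹ := by field_simp; ring
        rw [this, norm_mul, norm_neg, norm_inv]
        ring
      rw [h1, h2, h3]
      field_simp
    have hmu2 : ((‖u‖) ^ 2 * (‖u‖) ^ 2)⁻¹ * mu u⁻¹ = -mu u := by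
      rw [hmu]
      unfold mu
      field_simp
    rw [hdet]
    rw [Complex.real_smul]
    push_cast
    rw [hfac]
    have : ((((‖u‖) ^ 2 * (‖u‖) ^ 2)⁻¹ : ℝ) : ℂ) * ((mu u⁻¹ : ℝ) : ℂ)
        = ((-mu u : ℝ) : ℂ) := by
      rw [← Complex.ofReal_mul, hmu2]
    push_cast at this
    linear_combination (u * (1 - z * u)⁻¹) * this
  rw [setIntegral_congr_fun hs hpt]
  rw [integral_neg]
  congr 1
  have hball : {w : ℂ | ‖w‖ < 1} = Metric.ball (0:ℂ) 1 := by
    ext w; simp [mem_ball_zero_iff]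
  rw [hball]
  exact setIntegral_congr_set (by rw [hs_def]; exact MeasureTheory.diff_ae_eq_self.2 (measure_mono_null Set.inter_subset_right (measure_singleton 0)))
end

section
/- The iterated integral (1/2)·∫₀^{1/2} (s·(1−s))⁴ · ( ∫₀^{s} (u·(1−u))² du ) ds equals 1199/309657600. -/
lemma inner_int (s : ℝ) : ∫ u in (0:ℝ)..s, (u * (1 - u)) ^ 2 = s^3/3 - s^4/2 + s^5/5 := by
  have h : ∀ u ∈ Set.uIcc (0:ℝ) s, HasDerivAt (fun u : ℝ => u^3/3 - u^4/2 + u^5/5)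
      ((u * (1 - u)) ^ 2) u := by
    intro u _
    have h := (((hasDerivAt_pow 3 u).div_const 3).sub ((hasDerivAt_pow 4 u).div_const 2)).add
      ((hasDerivAt_pow 5 u).div_const 5)
    refine h.congr_deriv ?_
    push_cast
    ring
  have := intervalIntegral.integral_eq_sub_of_hasDerivAt h
    ((Continuous.intervalIntegrable (by continuity) 0 s))
  simpa using this

theorem stmt_15 :
    (1 / 2 : ℝ) *
        ∫ s in (0:ℝ)..(1/2), (s * (1 - s)) ^ 4 * ∫ u in (0:ℝ)..s, (u * (1 - u)) ^ 2 =
      1199 / 309657600 := by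
  have key : ∫ s in (0:ℝ)..(1/2), (s * (1 - s)) ^ 4 * ∫ u in (0:ℝ)..s, (u * (1 - u)) ^ 2
      = ∫ s in (0:ℝ)..(1/2), (s * (1 - s)) ^ 4 * (s^3/3 - s^4/2 + s^5/5) := by
    apply intervalIntegral.integral_congr
    intro s _
    simp only [inner_int]
  rw [key]
  have h : ∀ s ∈ Set.uIcc (0:ℝ) (1/2), HasDerivAt
      (fun s : ℝ => s^8/24 - 11*s^9/54 + 21*s^10/50 - 7*s^11/15 + 53*s^12/180 - s^13/10 + s^14/70)
      ((s * (1 - s)) ^ 4 * (s^3/3 - s^4/2 + s^5/5)) s := by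
    intro s _
    have e8 := (hasDerivAt_pow 8 s).div_const 24
    have e9 := ((hasDerivAt_pow 9 s).const_mul (11:ℝ)).div_const 54
    have e10 := ((hasDerivAt_pow 10 s).const_mul (21:ℝ)).div_const 50
    have e11 := ((hasDerivAt_pow 11 s).const_mul (7:ℝ)).div_const 15
    have e12 := ((hasDerivAt_pow 12 s).const_mul (53:ℝ)).div_const 180
    have e13 := (hasDerivAt_pow 13 s).div_const 10
    have e14 := (hasDerivAt_pow 14 s).div_const 70
    have h := (((((e8.sub e9).add e10).sub e11).add e12).sub e13).add e14
    refine h.congr_deriv ?_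
    push_cast
    ring
  rw [intervalIntegral.integral_eq_sub_of_hasDerivAt h
    (Continuous.intervalIntegrable (by continuity) 0 (1/2))]
  norm_num
end

section
/- For every complex number w with |w| < 1, the integral over the open unit disk {z ∈ ℂ : |z| < 1} of log|1 − w·z| · μ(z) with respect to Lebesgue measure equals (π/2)·Im( Li₂(w) ), where log|·| is the real logarithm of the modulus. -/
open MeasureTheory Complex

open Set Metric

lemma cauchy_circle {h : ℂ → ℂ} {r s : ℝ} {a : ℂ} (hr : 0 < r) (hrs : r < s)
    (ha : ‖a‖ < r) (hd : DifferentiableOn ℂ h (Metric.ball 0 s)) :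
    ∫ θ in (0:ℝ)..(2*Real.pi),
        circleMap 0 r θ * h (circleMap 0 r θ) / (circleMap 0 r θ - a)
      = 2 * Real.pi * h a := by
  have hdc : DiffContOnCl ℂ h (ball (0:ℂ) r) :=
    ⟨hd.mono (ball_subset_ball hrs.le), (hd.continuousOn).mono
      (by rw [closure_ball (0:ℂ) hr.ne']; exact closedBall_subset_ball hrs)⟩
  have key := hdc.circleIntegral_sub_inv_smul (w := a) (by simpa [mem_ball_zero_iff] using ha)
  simp only [circleIntegral, deriv_circleMap, smul_eq_mul] at key
  have congr1 : ∀ θ ∈ uIcc (0:ℝ) (2*Real.pi),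
      circleMap 0 r θ * I * ((circleMap 0 r θ - a)⁻¹ * h (circleMap 0 r θ))
        = I * (circleMap 0 r θ * h (circleMap 0 r θ) / (circleMap 0 r θ - a)) := by
    intro θ _
    ring
  rw [intervalIntegral.integral_congr congr1, intervalIntegral.integral_const_mul] at key
  have : (2 * ↑Real.pi * I : ℂ) * h a = I * (2 * Real.pi * h a) := by ring
  rw [this] at key
  exact mul_left_cancel₀ I_ne_zero key

lemma pointwise_id (w : ℂ) {r : ℝ} (hr0 : 0 < r) (hr1 : r < 1) (θ : ℝ) :
    r * (Real.log (‖1 - w * circleMap 0 r θ‖) * mu (circleMap 0 r θ))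
      = (2*r)⁻¹ *
        ((-(circleMap 0 r θ * Complex.log (1 - w * circleMap 0 r θ)
              / (circleMap 0 r θ - ((r:ℂ))^2))
          - Complex.log (1 - w * circleMap 0 r θ) / (circleMap 0 r θ - 1)).im) := by
  set z := circleMap 0 r θ with hzdef
  set L := Complex.log (1 - w * z) with hLdef
  have habs : ‖z‖ = r := by
    rw [hzdef, norm_circleMap_zero, abs_of_pos hr0]
  have hz0 : z ≠ 0 := by
    intro h; rw [h] at habs; simp at habs; exact hr0.ne' habs.symm
  have hz1 : z ≠ 1 := by
    intro h; rw [h] at habs; simp at habs; exact hr1.ne habs.symm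
  have hzr2 : z ≠ ((r:ℂ))^2 := by
    intro h
    have : ‖z‖ = r^2 := by rw [h]; simp [abs_of_pos hr0, sq_abs]
    rw [habs] at this
    nlinarith
  have hconj1 : (starRingEnd ℂ) z - 1 ≠ 0 := by
    intro h
    apply hz1
    have := congrArg (starRingEnd ℂ) h
    simpa [sub_eq_zero] using this
  have hmc : z * (starRingEnd ℂ) z = ((r:ℂ))^2 := by
    rw [Complex.mul_conj]
    rw [Complex.normSq_eq_norm_sq, habs]
    push_cast
    ring
  -- key algebraic identity
  have key : -(z * L / (z - ((r:ℂ))^2)) - L / (z - 1)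
      = L * (z - (starRingEnd ℂ) z) / ((z - 1) * ((starRingEnd ℂ) z - 1)) := by
    rw [← hmc]
    have h1 : z - z * (starRingEnd ℂ) z ≠ 0 := by rw [hmc]; exact sub_ne_zero.2 hzr2
    have h2 : z - 1 ≠ 0 := sub_ne_zero.2 hz1
    have h3 : 1 - (starRingEnd ℂ) z ≠ 0 := fun h => hconj1 (by linear_combination -h)
    rw [eq_div_iff (mul_ne_zero h2 hconj1)]
    field_simp
    ring
  rw [key]
  have hD : (z - 1) * ((starRingEnd ℂ) z - 1) = ((‖z-1‖)^2 : ℝ) := by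
    have : (starRingEnd ℂ) z - 1 = (starRingEnd ℂ) (z - 1) := by simp
    rw [this, Complex.mul_conj, Complex.normSq_eq_norm_sq]
  rw [hD, Complex.sub_conj]
  have hc0 : (‖z-1‖)^2 ≠ 0 := pow_ne_zero _ (norm_ne_zero_iff.mpr (sub_ne_zero.2 hz1))
  have him : ((L * (((2 * z.im : ℝ):ℂ) * I)) / (((‖z-1‖)^2 : ℝ):ℂ)).im
      = L.re * (2 * z.im) / (‖z-1‖)^2 := by
    rw [Complex.div_ofReal_im]
    simp [Complex.mul_im, Complex.mul_re]
  rw [him, mu, habs, ← Complex.log_re, ← hLdef]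
  field_simp

lemma slit_aux (w : ℂ) (hw : ‖w‖ < 1) (z : ℂ) (hz : ‖z‖ < 1) :
    (1 - w * z) ∈ Complex.slitPlane := by
  apply Or.inl
  have h1 : (w*z).re ≤ ‖w*z‖ := Complex.re_le_norm _
  have h2 : ‖w*z‖ < 1 := by
    rw [norm_mul]
    nlinarith [norm_nonneg w, norm_nonneg z]
  simp only [Complex.sub_re, Complex.one_re]
  linarith

lemma theta_integral (w : ℂ) (hw : ‖w‖ < 1) {r : ℝ} (hr0 : 0 < r) (hr1 : r < 1) :
    ∫ θ in Ioo (-Real.pi) Real.pi,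
        r * (Real.log (‖1 - w * circleMap 0 r θ‖) * mu (circleMap 0 r θ))
      = -(Real.pi / r) * (Complex.log (1 - w * ((r:ℂ))^2)).im := by
  have pi_pos := Real.pi_pos
  set s : ℝ := (1+r)/2 with hsdef
  have hrs : r < s := by rw [hsdef]; linarith
  have hs1 : s < 1 := by rw [hsdef]; linarith
  -- continuity of the complex integrand
  set L : ℝ → ℂ := fun θ => Complex.log (1 - w * circleMap 0 r θ) with hLdef
  set Ψ : ℝ → ℂ := fun θ =>
      -(circleMap 0 r θ * L θ / (circleMap 0 r θ - ((r:ℂ))^2)) - L θ / (circleMap 0 r θ - 1)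
    with hΨdef
  have habs : ∀ θ, ‖circleMap 0 r θ‖ = r := fun θ => by
    rw [norm_circleMap_zero, abs_of_pos hr0]
  have hz1 : ∀ θ, circleMap 0 r θ - 1 ≠ 0 := fun θ => by
    rw [sub_ne_zero]; intro h; have := habs θ; rw [h] at this; simp at this
    exact hr1.ne this.symm
  have habsr2 : ‖((r:ℂ))^2‖ = r^2 := by
    rw [norm_pow, Complex.norm_real, Real.norm_eq_abs, abs_of_pos hr0]
  have hzr2 : ∀ θ, circleMap 0 r θ - ((r:ℂ))^2 ≠ 0 := fun θ => by
    rw [sub_ne_zero]; intro h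
    have h2 := habs θ
    rw [h, habsr2] at h2
    nlinarith
  have hcontL : Continuous L := by
    rw [continuous_iff_continuousAt]
    intro θ
    apply (continuousAt_clog ?_).comp
    · exact (continuous_const.sub (continuous_const.mul (continuous_circleMap 0 r))).continuousAt
    · exact slit_aux w hw _ (by rw [habs θ]; exact hr1)
  have hcontΨ : Continuous Ψ := by
    apply Continuous.sub
    · apply Continuous.neg
      apply Continuous.div ((continuous_circleMap 0 r).mul hcontL)
        ((continuous_circleMap 0 r).sub continuous_const) hzr2
    · exact Continuous.div hcontL ((continuous_circleMap 0 r).sub continuous_const) hz1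
  -- from Ioo to interval integral, and shift by periodicity
  rw [← MeasureTheory.integral_Ioc_eq_integral_Ioo,
    ← intervalIntegral.integral_of_le (by linarith : -Real.pi ≤ Real.pi)]
  set f : ℝ → ℝ := fun θ =>
      r * (Real.log (‖1 - w * circleMap 0 r θ‖) * mu (circleMap 0 r θ)) with hf
  have hper : Function.Periodic f (2*Real.pi) := fun θ => by
    simp only [hf, (periodic_circleMap 0 r) θ]
  have hshift := hper.intervalIntegral_add_eq (-Real.pi) 0
  have e1 : -Real.pi + 2*Real.pi = Real.pi := by ring
  rw [e1, zero_add] at hshift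
  rw [hshift]
  -- rewrite integrand
  rw [intervalIntegral.integral_congr (fun θ _ => pointwise_id w hr0 hr1 θ)]
  rw [intervalIntegral.integral_const_mul]
  have h02 : (0:ℝ) ≤ 2*Real.pi := by linarith
  -- pull out .im
  have hint : IntegrableOn Ψ (Ioc 0 (2*Real.pi)) volume := hcontΨ.integrableOn_Ioc
  have him : (∫ θ in (0:ℝ)..(2*Real.pi), (Ψ θ).im) = (∫ θ in (0:ℝ)..(2*Real.pi), Ψ θ).im := by
    rw [intervalIntegral.integral_of_le h02, intervalIntegral.integral_of_le h02]
    exact integral_im hint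
  rw [him]
  -- Cauchy evaluations
  have hd1 : DifferentiableOn ℂ (fun z => Complex.log (1 - w * z)) (Metric.ball 0 s) := by
    intro z hz
    rw [mem_ball_zero_iff] at hz
    have : ‖z‖ < 1 := lt_trans hz hs1
    apply DifferentiableAt.differentiableWithinAt
    apply DifferentiableAt.clog
    · exact (differentiable_const _).sub ((differentiable_const _).mul differentiable_id) z
    · exact slit_aux w hw z this
  have hd2 : DifferentiableOn ℂ (fun z => Complex.log (1 - w * z) / (z - 1))
      (Metric.ball 0 s) := by
    apply DifferentiableOn.div hd1
    · exact (differentiable_id.sub (differentiable_const _)).differentiableOn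
    · intro z hz
      rw [mem_ball_zero_iff] at hz
      rw [sub_ne_zero]
      intro h
      rw [h] at hz
      simp at hz
      linarith
  have har2 : ‖((r:ℂ))^2‖ < r := by
    rw [norm_pow, Complex.norm_real, Real.norm_eq_abs, abs_of_pos hr0]
    nlinarith
  have hc1 := cauchy_circle hr0 hrs har2 hd1
  have hc2 := cauchy_circle hr0 hrs (by simpa using hr0 : ‖(0:ℂ)‖ < r) hd2
  -- simplify hc2 : RHS is 0
  norm_num [Complex.log_one] at hc2
  have hc2' : (∫ θ in (0:ℝ)..(2*Real.pi), L θ / (circleMap 0 r θ - 1)) = 0 := by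
    refine (intervalIntegral.integral_congr (fun θ _ => ?_)).trans hc2
    have hz0 : circleMap 0 r θ ≠ 0 := circleMap_ne_center hr0.ne'
    show L θ / (circleMap 0 r θ - 1)
      = circleMap 0 r θ * (L θ / (circleMap 0 r θ - 1)) / circleMap 0 r θ
    field_simp
  have hintA : IntervalIntegrable
      (fun θ => -(circleMap 0 r θ * L θ / (circleMap 0 r θ - ((r:ℂ))^2))) volume 0 (2*Real.pi) := by
    apply Continuous.intervalIntegrable
    exact (((continuous_circleMap 0 r).mul hcontL).div
      ((continuous_circleMap 0 r).sub continuous_const) hzr2).neg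
  have hintB : IntervalIntegrable (fun θ => L θ / (circleMap 0 r θ - 1)) volume 0 (2*Real.pi) := by
    apply Continuous.intervalIntegrable
    exact hcontL.div ((continuous_circleMap 0 r).sub continuous_const) hz1
  have hval : (∫ θ in (0:ℝ)..(2*Real.pi), Ψ θ)
      = -(2 * Real.pi * Complex.log (1 - w * ((r:ℂ))^2)) := by
    rw [hΨdef]
    rw [intervalIntegral.integral_sub hintA hintB, hc2', sub_zero,
      intervalIntegral.integral_neg, hc1]
  rw [hval]
  have : (-(2 * (Real.pi:ℂ) * Complex.log (1 - w * ((r:ℂ))^2))).im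
      = -(2 * Real.pi * (Complex.log (1 - w * ((r:ℂ))^2)).im) := by
    simp [Complex.mul_im]
  rw [this]
  field_simp

-- uniform bound for the log factor
lemma log_bound (w : ℂ) (hw : ‖w‖ < 1) (z : ℂ) (hz : ‖z‖ ≤ 1) :
    |Real.log (‖1 - w * z‖)|
      ≤ max (-Real.log (1 - ‖w‖)) (Real.log 2) := by
  have hw0 : (0:ℝ) ≤ ‖w‖ := norm_nonneg w
  have hz0 : (0:ℝ) ≤ ‖z‖ := norm_nonneg z
  have h1 : ‖w*z‖ ≤ ‖w‖ := by
    rw [norm_mul]; nlinarith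
  have hlow : 1 - ‖w‖ ≤ ‖1 - w*z‖ := by
    have := norm_sub_norm_le (1:ℂ) (w*z)
    simp only [norm_one] at this
    linarith
  have hup : ‖1 - w*z‖ ≤ 2 := by
    have := norm_sub_le (1:ℂ) (w*z)
    simp only [norm_one] at this
    linarith
  have hpos : (0:ℝ) < 1 - ‖w‖ := by linarith
  rcases le_or_gt 0 (Real.log (‖1 - w*z‖)) with h | h
  · rw [_root_.abs_of_nonneg h]
    exact le_max_of_le_right (Real.log_le_log (by linarith) hup)
  · rw [_root_.abs_of_neg h]
    apply le_max_of_le_left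
    have := Real.log_le_log hpos hlow
    linarith

-- exact value of the angular integral of the weight
lemma K_int {r : ℝ} (hr0 : 0 < r) (hr1 : r < 1) :
    ∫ θ in Ioo (-Real.pi) Real.pi, |Real.sin θ| / (r^2 - 2*r*Real.cos θ + 1)
      = (2/r) * (Real.log (1+r) - Real.log (1-r)) := by
  have pi_pos := Real.pi_pos
  set d : ℝ → ℝ := fun θ => r^2 - 2*r*Real.cos θ + 1 with hd
  have hdpos : ∀ θ, 0 < d θ := fun θ => by
    have h1 := Real.cos_le_one θ
    have h2 := Real.neg_one_le_cos θ
    simp only [hd]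
    nlinarith
  set k : ℝ → ℝ := fun θ => |Real.sin θ| / d θ with hk
  have hcont : Continuous k :=
    (continuous_abs.comp Real.continuous_sin).div
      (by continuity) (fun θ => (hdpos θ).ne')
  have heven : ∀ θ, k (-θ) = k θ := fun θ => by
    simp [hk, hd, Real.sin_neg, Real.cos_neg, abs_neg]
  rw [← MeasureTheory.integral_Ioc_eq_integral_Ioo,
    ← intervalIntegral.integral_of_le (by linarith : -Real.pi ≤ Real.pi)]
  have hsplit : ∫ θ in (-Real.pi)..Real.pi, k θ
      = (∫ θ in (-Real.pi)..(0:ℝ), k θ) + ∫ θ in (0:ℝ)..Real.pi, k θ := by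
    rw [intervalIntegral.integral_add_adjacent_intervals] <;>
      exact hcont.intervalIntegrable _ _
  have hneg : (∫ θ in (-Real.pi)..(0:ℝ), k θ) = ∫ θ in (0:ℝ)..Real.pi, k θ := by
    have := intervalIntegral.integral_comp_neg (a := (0:ℝ)) (b := Real.pi) k
    rw [neg_zero] at this
    rw [← this]
    exact intervalIntegral.integral_congr (fun θ _ => (heven θ))
  -- FTC on [0, π]
  have hderiv : ∀ θ ∈ uIcc (0:ℝ) Real.pi,
      HasDerivAt (fun t => (2*r)⁻¹ * Real.log (d t)) (Real.sin θ / d θ) θ := by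
    intro θ _
    have hd' : HasDerivAt d (2*r*Real.sin θ) θ := by
      have h := (((Real.hasDerivAt_cos θ).const_mul (2*r)).const_sub (r^2)).add_const 1
      exact h.congr_deriv (by ring)
    have hlog : HasDerivAt (fun t => Real.log (d t)) ((d θ)⁻¹ * (2*r*Real.sin θ)) θ :=
      (Real.hasDerivAt_log (hdpos θ).ne').comp θ hd'
    have h2 := hlog.const_mul ((2*r)⁻¹)
    exact h2.congr_deriv (by have := (hdpos θ).ne'; have := hr0.ne'; field_simp)
  have hftc : ∫ θ in (0:ℝ)..Real.pi, k θ
      = (2*r)⁻¹ * Real.log (d Real.pi) - (2*r)⁻¹ * Real.log (d 0) := by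
    rw [intervalIntegral.integral_congr (g := fun θ => Real.sin θ / d θ) ?_]
    · exact intervalIntegral.integral_eq_sub_of_hasDerivAt hderiv
        ((Real.continuous_sin.div (by continuity) (fun θ => (hdpos θ).ne')).intervalIntegrable _ _)
    · intro θ hθ
      rw [uIcc_of_le (by linarith : (0:ℝ) ≤ Real.pi)] at hθ
      simp only [hk]
      rw [_root_.abs_of_nonneg (Real.sin_nonneg_of_nonneg_of_le_pi hθ.1 hθ.2)]
  have hval : (2*r)⁻¹ * Real.log (d Real.pi) - (2*r)⁻¹ * Real.log (d 0)
      = (1/r) * (Real.log (1+r) - Real.log (1-r)) := by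
    have e1 : d Real.pi = (1+r)^2 := by simp [hd, Real.cos_pi]; ring
    have e2 : d 0 = (1-r)^2 := by simp [hd, Real.cos_zero]; ring
    rw [e1, e2, Real.log_pow, Real.log_pow]
    push_cast
    field_simp
  rw [hsplit, hneg, hftc, hval]
  ring

lemma K_le {r : ℝ} (hr0 : 0 < r) (hr1 : r < 1) :
    (2/r) * (Real.log (1+r) - Real.log (1-r)) ≤ 2 + 8*(1-r)^(-(1/2) : ℝ) := by
  have hu : (0:ℝ) < 1 - r := by linarith
  set X : ℝ := (1-r)^(-(1/2) : ℝ) with hX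
  have hXpos : 0 < X := Real.rpow_pos_of_pos hu _
  have h1 : Real.log (1+r) ≤ r := by
    have := Real.log_le_sub_one_of_pos (show (0:ℝ) < 1+r by linarith)
    linarith
  have hXone : (1:ℝ) ≤ X := by
    rw [hX]
    apply Real.one_le_rpow_of_pos_of_le_one_of_nonpos hu (by linarith)
    norm_num
  have key : -Real.log (1-r) ≤ 2*X - 2 := by
    have h := Real.log_le_sub_one_of_pos hXpos
    have hl : Real.log X = -(1/2) * Real.log (1-r) := Real.log_rpow hu _
    rw [hl] at h
    linarith
  have hlogpos : 0 ≤ Real.log (1+r) := Real.log_nonneg (by linarith)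
  have hlogneg : Real.log (1-r) ≤ 0 := Real.log_nonpos (by linarith) (by linarith)
  rw [div_mul_eq_mul_div, div_le_iff₀ hr0]
  rcases le_or_gt r (1/2) with hc | hc
  · have key2 : -Real.log (1-r) ≤ 2*r := by
      have h := Real.log_le_sub_one_of_pos (inv_pos.2 hu)
      rw [Real.log_inv] at h
      have : (1-r)⁻¹ - 1 ≤ 2*r := by
        rw [inv_eq_one_div, div_sub' hu.ne']
        rw [div_le_iff₀ hu]
        nlinarith
      linarith
    nlinarith
  · nlinarith

lemma psi_integrable :
    IntegrableOn (fun r : ℝ => 2 + 8*(1-r)^(-(1/2) : ℝ)) (Ioo (0:ℝ) 1) := by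
  have h : IntervalIntegrable (fun x : ℝ => x ^ (-(1/2) : ℝ)) volume 0 1 :=
    intervalIntegral.intervalIntegrable_rpow' (by norm_num)
  have h2 := (h.comp_sub_left 1).symm
  norm_num at h2
  rw [intervalIntegrable_iff_integrableOn_Ioo_of_le (by norm_num : (0:ℝ) ≤ 1)] at h2
  have hconst : IntegrableOn (fun _ : ℝ => (2:ℝ)) (Ioo (0:ℝ) 1) :=
    integrableOn_const (by simp [Real.volume_Ioo])
  exact hconst.add (h2.const_mul 8)

-- basic facts about circleMap points
lemma cm_im (r θ : ℝ) : (circleMap 0 r θ).im = r * Real.sin θ := by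
  simp [circleMap, Complex.exp_mul_I, Complex.cos_ofReal_re, Complex.sin_ofReal_re]

lemma cm_normSq {r : ℝ} (θ : ℝ) :
    ‖circleMap 0 r θ - 1‖ ^ 2 = r^2 - 2*r*Real.cos θ + 1 := by
  rw [Complex.sq_norm, Complex.normSq_apply]
  simp [circleMap, Complex.exp_mul_I, Complex.cos_ofReal_re, Complex.sin_ofReal_re,
    Complex.cos_ofReal_im, Complex.sin_ofReal_im]
  nlinarith [Real.sin_sq_add_cos_sq θ]

-- continuity of the slice in θ
lemma slice_cont (w : ℂ) (hw : ‖w‖ < 1) {r : ℝ} (hr0 : 0 < r) (hr1 : r < 1) :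
    Continuous (fun θ =>
      Real.log (‖1 - w * circleMap 0 r θ‖) * mu (circleMap 0 r θ)) := by
  have habs : ∀ θ, ‖circleMap 0 r θ‖ = r := fun θ => by
    rw [norm_circleMap_zero, abs_of_pos hr0]
  have h1 : ∀ θ, (1 : ℂ) - w * circleMap 0 r θ ≠ 0 := fun θ => by
    intro h
    have h2 : ‖w * circleMap 0 r θ‖ < 1 := by
      rw [norm_mul, habs θ]
      nlinarith [norm_nonneg w]
    rw [sub_eq_zero] at h
    rw [← h] at h2
    simp at h2
  have hz1 : ∀ θ, circleMap 0 r θ - 1 ≠ 0 := fun θ => by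
    rw [sub_ne_zero]; intro h; have := habs θ; rw [h] at this; simp at this
    exact hr1.ne this.symm
  have hcmc : Continuous (circleMap 0 r) := continuous_circleMap 0 r
  apply Continuous.mul
  · rw [continuous_iff_continuousAt]
    intro θ
    have hin : Continuous (fun x => ‖1 - w * circleMap 0 r x‖) :=
      continuous_norm.comp (continuous_const.sub (continuous_const.mul hcmc))
    exact ContinuousAt.comp (g := Real.log) (x := θ)
      (f := fun x => ‖1 - w * circleMap 0 r x‖)
      (Real.continuousAt_log (norm_ne_zero_iff.mpr (h1 θ))) hin.continuousAt
  · unfold mu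
    apply Continuous.div
    · exact Complex.continuous_im.comp hcmc
    · apply Continuous.mul
      · exact ((continuous_norm.comp hcmc).pow 2)
      · exact ((continuous_norm.comp (hcmc.sub continuous_const)).pow 2)
    · intro θ
      have e1 : ‖circleMap 0 r θ‖ ≠ 0 := by rw [habs θ]; exact hr0.ne'
      have e2 : ‖circleMap 0 r θ - 1‖ ≠ 0 := norm_ne_zero_iff.mpr (hz1 θ)
      positivity

lemma G_integrable (w : ℂ) (hw : ‖w‖ < 1) :
    IntegrableOn (fun p : ℝ × ℝ =>
        p.1 * (Real.log (‖1 - w * circleMap 0 p.1 p.2‖) * mu (circleMap 0 p.1 p.2)))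
      (Ioo (0:ℝ) 1 ×ˢ Ioo (-Real.pi) Real.pi) := by
  set C : ℝ := max (-Real.log (1 - ‖w‖)) (Real.log 2) with hC
  have hC0 : 0 ≤ C := le_max_of_le_right (Real.log_nonneg one_le_two)
  set G : ℝ × ℝ → ℝ := fun p =>
      p.1 * (Real.log (‖1 - w * circleMap 0 p.1 p.2‖) * mu (circleMap 0 p.1 p.2))
    with hG
  set S : Set (ℝ × ℝ) := Ioo (0:ℝ) 1 ×ˢ Ioo (-Real.pi) Real.pi with hS
  have hSm : MeasurableSet S := (measurableSet_Ioo.prod measurableSet_Ioo)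
  -- continuity of G on S
  have hGcont : ContinuousOn G S := by
    have hcm : Continuous (fun p : ℝ × ℝ => circleMap 0 p.1 p.2) := by
      simp only [circleMap]
      continuity
    have habs : ∀ p ∈ S, ‖circleMap 0 p.1 p.2‖ = p.1 := fun p hp => by
      rw [norm_circleMap_zero, abs_of_pos hp.1.1]
    have h1 : ∀ p ∈ S, (1 : ℂ) - w * circleMap 0 p.1 p.2 ≠ 0 := fun p hp => by
      intro h
      have h2 : ‖w * circleMap 0 p.1 p.2‖ < 1 := by
        rw [norm_mul, habs p hp]
        nlinarith [norm_nonneg w, hp.1.1, hp.1.2]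
      rw [sub_eq_zero] at h
      rw [← h] at h2
      simp at h2
    have hz0 : ∀ p ∈ S, circleMap 0 p.1 p.2 ≠ 0 := fun p hp => by
      intro h
      have := habs p hp
      rw [h] at this; simp at this
      exact hp.1.1.ne this
    have hz1 : ∀ p ∈ S, circleMap 0 p.1 p.2 - 1 ≠ 0 := fun p hp => by
      rw [sub_ne_zero]; intro h
      have := habs p hp
      rw [h] at this; simp at this
      exact hp.1.2.ne this.symm
    apply ContinuousOn.mul (continuous_fst.continuousOn)
    apply ContinuousOn.mul
    · apply ContinuousOn.log
      · exact (continuous_norm.comp (continuous_const.sub (continuous_const.mul hcm))).continuousOn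
      · exact fun p hp => norm_ne_zero_iff.mpr (h1 p hp)
    · unfold mu
      apply ContinuousOn.div
      · exact (Complex.continuous_im.comp hcm).continuousOn
      · exact (((continuous_norm.comp hcm).pow 2).mul
          ((continuous_norm.comp (hcm.sub continuous_const)).pow 2)).continuousOn
      · intro p hp
        have e1 : ‖circleMap 0 p.1 p.2‖ ≠ 0 := norm_ne_zero_iff.mpr (hz0 p hp)
        have e2 : ‖circleMap 0 p.1 p.2 - 1‖ ≠ 0 := norm_ne_zero_iff.mpr (hz1 p hp)
        positivity
  have hmeas0 : AEStronglyMeasurable G (volume.restrict S) :=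
    hGcont.aestronglyMeasurable hSm
  rw [IntegrableOn, Measure.volume_eq_prod, ← Measure.prod_restrict]
  have hmeas : AEStronglyMeasurable G
      ((volume.restrict (Ioo (0:ℝ) 1)).prod (volume.restrict (Ioo (-Real.pi) Real.pi))) := by
    rw [Measure.prod_restrict, ← Measure.volume_eq_prod]
    exact hmeas0
  apply (integrable_prod_iff hmeas).2
  constructor
  · -- slices integrable
    rw [ae_restrict_iff' measurableSet_Ioo]
    apply ae_of_all
    intro r hr
    exact ((continuous_const.mul (slice_cont w hw hr.1 hr.2)).integrableOn_Icc).mono_set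
      Ioo_subset_Icc_self
  · -- integral of norms
    apply Integrable.mono' (psi_integrable.const_mul C)
    · exact hmeas.norm.integral_prod_right'
    · rw [ae_restrict_iff' measurableSet_Ioo]
      apply ae_of_all
      intro r hr
      have hr0 := hr.1
      have hr1 := hr.2
      have hdpos : ∀ θ : ℝ, (0:ℝ) < r^2 - 2*r*Real.cos θ + 1 := fun θ => by
        nlinarith [Real.cos_le_one θ, Real.neg_one_le_cos θ]
      have hkcont : Continuous (fun θ : ℝ => |Real.sin θ| / (r^2 - 2*r*Real.cos θ + 1)) :=
        (continuous_abs.comp Real.continuous_sin).div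
          ((continuous_const.sub (continuous_const.mul Real.continuous_cos)).add
            continuous_const) (fun θ => (hdpos θ).ne')
      have hint1 : IntegrableOn (fun θ => ‖G (r, θ)‖) (Ioo (-Real.pi) Real.pi) :=
        (((continuous_const.mul (slice_cont w hw hr0 hr1)).norm).integrableOn_Icc).mono_set
          Ioo_subset_Icc_self
      have hint2 : IntegrableOn
          (fun θ : ℝ => C * (|Real.sin θ| / (r^2 - 2*r*Real.cos θ + 1)))
          (Ioo (-Real.pi) Real.pi) :=
        ((continuous_const.mul hkcont).integrableOn_Icc).mono_set Ioo_subset_Icc_self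
      have hnn : 0 ≤ ∫ θ, ‖G (r, θ)‖ ∂(volume.restrict (Ioo (-Real.pi) Real.pi)) :=
        integral_nonneg (fun θ => norm_nonneg _)
      rw [Real.norm_of_nonneg hnn]
      -- pointwise bound ‖G (r,θ)‖ ≤ C * k θ
      have hbound : ∀ θ, ‖G (r, θ)‖
          ≤ C * (|Real.sin θ| / (r^2 - 2*r*Real.cos θ + 1)) := by
        intro θ
        have hdp : 0 < r^2 - 2*r*Real.cos θ + 1 := hdpos θ
        have habs : ‖circleMap 0 r θ‖ = r := by
          rw [norm_circleMap_zero, abs_of_pos hr0]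
        have hd : ‖circleMap 0 r θ - 1‖^2 = r^2 - 2*r*Real.cos θ + 1 := cm_normSq θ
        have hlb := log_bound w hw (circleMap 0 r θ) (by rw [habs]; exact hr1.le)
        have e : r * (Real.log (‖1 - w * circleMap 0 r θ‖)
              * (r * Real.sin θ / (r^2 * (r^2 - 2*r*Real.cos θ + 1))))
            = Real.log (‖1 - w * circleMap 0 r θ‖)
              * (Real.sin θ / (r^2 - 2*r*Real.cos θ + 1)) := by
          have h2 : r ^ 2 ≠ 0 := by positivity
          field_simp
        have hGval : ‖G (r, θ)‖
            = |Real.log (‖1 - w * circleMap 0 r θ‖)|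
              * (|Real.sin θ| / (r^2 - 2*r*Real.cos θ + 1)) := by
          simp only [hG]
          unfold mu
          rw [cm_im, hd, habs, e, Real.norm_eq_abs, abs_mul, abs_div,
            _root_.abs_of_pos hdp]
        rw [hGval]
        apply mul_le_mul_of_nonneg_right hlb
        positivity
      calc ∫ θ, ‖G (r, θ)‖ ∂(volume.restrict (Ioo (-Real.pi) Real.pi))
          ≤ ∫ θ in Ioo (-Real.pi) Real.pi,
              C * (|Real.sin θ| / (r^2 - 2*r*Real.cos θ + 1)) :=
            setIntegral_mono_on hint1 hint2 measurableSet_Ioo (fun θ _ => hbound θ)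
        _ = C * ((2/r) * (Real.log (1+r) - Real.log (1-r))) := by
            rw [integral_const_mul, K_int hr0 hr1]
        _ ≤ C * (2 + 8*(1-r)^(-(1/2) : ℝ)) :=
            mul_le_mul_of_nonneg_left (K_le hr0 hr1) hC0

lemma li2_int (w : ℂ) (hw : ‖w‖ < 1) :
    IntegrableOn (fun t : ℝ => Complex.log (1 - w * (t:ℂ)) / (t:ℂ)) (Ioc (0:ℝ) 1) volume := by
  have hw0 : (0:ℝ) ≤ ‖w‖ := norm_nonneg w
  have hpos : (0:ℝ) < 1 - ‖w‖ := by linarith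
  set C2 : ℝ := (‖w‖)^2 * (1 - ‖w‖)⁻¹ / 2 + ‖w‖ with hC2
  have hmeas : AEStronglyMeasurable (fun t : ℝ => Complex.log (1 - w * (t:ℂ)) / (t:ℂ))
      (volume.restrict (Ioc (0:ℝ) 1)) := by
    apply ContinuousOn.aestronglyMeasurable _ measurableSet_Ioc
    intro t ht
    apply ContinuousWithinAt.div
    · apply ContinuousAt.continuousWithinAt
      apply ContinuousAt.comp (g := Complex.log)
      · apply continuousAt_clog
        apply Or.inl
        have h1 : (w*(t:ℂ)).re ≤ ‖w*(t:ℂ)‖ := Complex.re_le_norm _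
        have h2 : ‖w*(t:ℂ)‖ ≤ ‖w‖ := by
          rw [norm_mul, Complex.norm_real, Real.norm_eq_abs, abs_of_pos ht.1]
          nlinarith [ht.2]
        simp only [Complex.sub_re, Complex.one_re]
        linarith
      · exact (continuous_const.sub (continuous_const.mul Complex.continuous_ofReal)).continuousAt
    · exact Complex.continuous_ofReal.continuousAt.continuousWithinAt
    · simp only [ne_eq, Complex.ofReal_eq_zero]
      exact ht.1.ne'
  apply Integrable.mono' (integrableOn_const (by simp) : IntegrableOn (fun _ : ℝ => C2) _ _) hmeas
  rw [ae_restrict_iff' measurableSet_Ioc]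
  apply ae_of_all
  intro t ht
  have ht0 := ht.1
  have ht1 := ht.2
  have habs : ‖w * (t:ℂ)‖ = ‖w‖ * t := by
    rw [norm_mul, Complex.norm_real, Real.norm_eq_abs, abs_of_pos ht0]
  have habs1 : ‖w * (t:ℂ)‖ < 1 := by rw [habs]; nlinarith
  have hlog : ‖Complex.log (1 - w * (t:ℂ))‖
      ≤ ‖w * (t:ℂ)‖^2 * (1 - ‖w * (t:ℂ)‖)⁻¹ / 2 + ‖w * (t:ℂ)‖ := by
    have h := Complex.norm_log_one_add_le (z := -(w * (t:ℂ)))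
      (by rw [norm_neg]; simpa using habs1)
    rw [← sub_eq_add_neg] at h
    simpa [norm_neg] using h
  have hnorm : ‖w * (t:ℂ)‖ = ‖w‖ * t := by
    rw [habs]
  rw [hnorm] at hlog
  have hinv : (1 - ‖w‖ * t)⁻¹ ≤ (1 - ‖w‖)⁻¹ := by
    apply inv_anti₀ hpos
    nlinarith
  have hbound : ‖Complex.log (1 - w * (t:ℂ))‖ ≤ t * C2 := by
    have h1 : (‖w‖ * t)^2 * (1 - ‖w‖ * t)⁻¹ / 2
        ≤ t * ((‖w‖)^2 * (1 - ‖w‖)⁻¹ / 2) := by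
      have hq : (0:ℝ) < 1 - ‖w‖ * t := by nlinarith
      have e1 : (0:ℝ) ≤ (1 - ‖w‖ * t)⁻¹ := (inv_pos.2 hq).le
      have e2 : (‖w‖ * t)^2 ≤ (‖w‖)^2 * t := by nlinarith
      have e3 : (‖w‖)^2 * t * (1 - ‖w‖ * t)⁻¹
          ≤ (‖w‖)^2 * t * (1 - ‖w‖)⁻¹ := by
        apply mul_le_mul_of_nonneg_left hinv (by positivity)
      nlinarith [mul_le_mul_of_nonneg_right e2 e1]
    rw [hC2]
    nlinarith
  rw [norm_div, Complex.norm_real, Real.norm_eq_abs, abs_of_pos ht0,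
    div_le_iff₀ ht0]
  calc ‖Complex.log (1 - w * (t:ℂ))‖ ≤ t * C2 := hbound
    _ = C2 * t := by ring

lemma sq_image_Ioo : (fun x : ℝ => x^2) '' Ioo (0:ℝ) 1 = Ioo (0:ℝ) 1 := by
  ext y
  constructor
  · rintro ⟨x, hx, rfl⟩
    constructor <;> simp only <;> nlinarith [hx.1, hx.2]
  · intro hy
    refine ⟨Real.sqrt y, ⟨Real.sqrt_pos.2 hy.1, ?_⟩, Real.sq_sqrt hy.1.le⟩
    have := Real.sqrt_lt_sqrt hy.1.le hy.2
    simpa using this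

lemma subst_lemma (w : ℂ) :
    ∫ t in Ioo (0:ℝ) 1, (Complex.log (1 - w * (t:ℂ))).im / t
      = 2 * ∫ r in Ioo (0:ℝ) 1, (Complex.log (1 - w * ((r:ℂ))^2)).im / r := by
  have hderiv : ∀ x ∈ Ioo (0:ℝ) 1,
      HasDerivWithinAt (fun x : ℝ => x^2) (2*x) (Ioo (0:ℝ) 1) x := by
    intro x _
    have := hasDerivAt_pow 2 x
    norm_num at this
    exact this.hasDerivWithinAt
  have hinj : InjOn (fun x : ℝ => x^2) (Ioo (0:ℝ) 1) := by
    intro a ha b hb h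
    simp only at h
    apply le_antisymm <;> nlinarith [ha.1, hb.1]
  have h := integral_image_eq_integral_abs_deriv_smul measurableSet_Ioo hderiv hinj
    (fun t => (Complex.log (1 - w * (t:ℂ))).im / t)
  rw [sq_image_Ioo] at h
  rw [h]
  rw [← integral_const_mul]
  apply setIntegral_congr_fun measurableSet_Ioo
  intro x hx
  have hx0 := hx.1
  simp only [smul_eq_mul]
  rw [abs_of_pos (by linarith : (0:ℝ) < 2*x)]
  push_cast
  have : x^2 ≠ 0 := by positivity
  field_simp

lemma polar_symm_eq_circleMap (p : ℝ × ℝ) :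
    Complex.polarCoord.symm p = circleMap 0 p.1 p.2 := by
  rw [Complex.polarCoord_symm_apply]
  simp [circleMap, Complex.exp_mul_I, Complex.ofReal_cos, Complex.ofReal_sin]

theorem stmt_19 (w : ℂ) (hw : ‖w‖ < 1) :
    ∫ z in {z : ℂ | ‖z‖ < 1}, Real.log ‖1 - w * z‖ * mu z =
      Real.pi / 2 * (Li2 w).im := by
  have pi_pos := Real.pi_pos
  set D : Set ℂ := {z : ℂ | ‖z‖ < 1} with hD
  have hDm : MeasurableSet D := (isOpen_lt continuous_norm continuous_const).measurableSet
  set F : ℂ → ℝ := fun z => Real.log (‖1 - w * z‖) * mu z with hF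
  set B : Set (ℝ × ℝ) := Ioo (0:ℝ) 1 ×ˢ Ioo (-Real.pi) Real.pi with hB
  have hBm : MeasurableSet B := measurableSet_Ioo.prod measurableSet_Ioo
  have hBsub : B ⊆ polarCoord.target := by
    rw [polarCoord_target]
    intro p hp
    exact ⟨hp.1.1, hp.2⟩
  -- step 1-3 : polar coordinates
  have step1 : (∫ z in D, F z) = ∫ p in B, p.1 * F (circleMap 0 p.1 p.2) := by
    rw [← integral_indicator hDm, ← Complex.integral_comp_polarCoord_symm (D.indicator F)]
    have congr1 : ∀ p ∈ polarCoord.target,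
        p.1 • (D.indicator F) (Complex.polarCoord.symm p)
          = B.indicator (fun p : ℝ × ℝ => p.1 * F (circleMap 0 p.1 p.2)) p := by
      intro p hp
      rw [polarCoord_target, mem_prod] at hp
      have habs : ‖Complex.polarCoord.symm p‖ = p.1 := by
        rw [Complex.norm_polarCoord_symm, abs_of_pos hp.1]
      have hp1 : 0 < p.1 := hp.1
      rcases lt_or_ge p.1 1 with h | h
      · rw [indicator_of_mem (by rw [hD, mem_setOf_eq, habs]; exact h),
          indicator_of_mem (by exact ⟨⟨hp.1, h⟩, hp.2⟩ : p ∈ B),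
          polar_symm_eq_circleMap, smul_eq_mul]
      · rw [indicator_of_notMem (by rw [hD, mem_setOf_eq, habs]; exact not_lt.2 h),
          indicator_of_notMem (by intro hmem; exact absurd hmem.1.2 (not_lt.2 h)),
          smul_zero]
    rw [setIntegral_congr_fun polarCoord.open_target.measurableSet congr1,
      setIntegral_indicator hBm, inter_eq_self_of_subset_right hBsub]
  rw [step1]
  -- step 4 : Fubini
  have step4 : (∫ p in B, p.1 * F (circleMap 0 p.1 p.2))
      = ∫ r in Ioo (0:ℝ) 1, ∫ θ in Ioo (-Real.pi) Real.pi,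
          r * F (circleMap 0 r θ) := by
    rw [hB, Measure.volume_eq_prod]
    apply setIntegral_prod
    rw [← Measure.volume_eq_prod]
    exact G_integrable w hw
  rw [step4]
  -- step 5 : angular integral
  have step5 : (∫ r in Ioo (0:ℝ) 1, ∫ θ in Ioo (-Real.pi) Real.pi, r * F (circleMap 0 r θ))
      = ∫ r in Ioo (0:ℝ) 1, -Real.pi * ((Complex.log (1 - w * ((r:ℂ))^2)).im / r) := by
    apply setIntegral_congr_fun measurableSet_Ioo
    intro r hr
    simp only [hF]
    rw [theta_integral w hw hr.1 hr.2]
    field_simp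
  rw [step5, integral_const_mul]
  -- step 7 : substitution
  have step7 := subst_lemma w
  -- step 8 : identify RHS with Li2
  have step8 : (Li2 w).im = -∫ t in Ioo (0:ℝ) 1, (Complex.log (1 - w * (t:ℂ))).im / t := by
    rw [Li2, Complex.neg_im, neg_inj]
    rw [intervalIntegral.integral_of_le zero_le_one]
    rw [← RCLike.im_eq_complex_im, ← integral_im (li2_int w hw)]
    simp only [RCLike.im_eq_complex_im]
    rw [integral_Ioc_eq_integral_Ioo]
    apply setIntegral_congr_fun measurableSet_Ioo
    intro t _
    simp only [Complex.div_ofReal_im]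
  rw [step8]
  rw [step7]
  ring
end
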